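/- arXiv:2301.02545 — 2 statements merged into one kernel-verified Lean document; each statement's English description precedes it below -/
import Mathlib

section
/- Let I ⊆ S = k[x_1,…,x_n] be a homogeneous ideal (standard grading) with A = S/I a domain of Krull dimension d. Let C be a maximal cone in the Gröbner fan GF(I) whose monomial initial ideal init_C(I) contains no variable, and suppose C contains maximal prime cones τ_1,…,τ_q of trop(I) as d-dimensional faces, with associated Khovanskii-finite valuations ν_i := ν_{M_i} (M_i ∈ Q^{d×n} with rows a basis of the span of τ_i chosen among the rows of M below). Let M ∈ Q^{n_C×n} be the matrix whose rows r_1,…,r_{n_C} are generators of the lineality space L_I together with representatives of the primitive ray generators of C/L_I, and let B = B_C be the standard monomial basis of A determined by init_C(I). Define the B-Newton–Okounkov body Δ_B(A) := conv(⋃_{j≥1} {(1/j)·Ma : x^a a standard monomial of degree j}) ⊆ R^{n_C}. Then for each 1 ≤ i ≤ q there is a coordinate projection p_i : R^{n_C} → R^d (onto the coordinates indexed by the rows of M constituting M_i) such that p_i(Δ_B(A)) = Δ(A,ν_i), the Newton–Okounkov body of ν_i. -/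
/- STATEMENT 15: let `C` be a maximal Gröbner cone (with monomial initial ideal
containing no variable) of a homogeneous ideal `I` containing maximal prime cones
`τ_1,…,τ_q` of `trop(I)` as `d`-dimensional faces, let `M` be the matrix of
lineality generators and ray representatives of `C`, and let `B` be the standard
monomial basis.  Then for each `i` the coordinate projection `p_i` (onto the rows
of `M` spanning `τ_i`) maps the `B`-Newton–Okounkov body `Δ_B(A)` onto the
Newton–Okounkov body `Δ(A,ν_i)` of the valuation `ν_i` associated with `τ_i`. -/

open MvPolynomial
open scoped Classical

noncomputable section

def wdot {n : ℕ} (w : Fin n → ℝ) (a : Fin n →₀ ℕ) : ℝ := ∑ i, w i * (a i : ℝ)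

def initForm {k : Type*} [Field k] {n : ℕ} (w : Fin n → ℝ) (f : MvPolynomial (Fin n) k) :
    MvPolynomial (Fin n) k :=
  ∑ b ∈ f.support.filter (fun b => ∀ a ∈ f.support, wdot w a ≤ wdot w b),
    monomial b (coeff b f)

def initIdeal {k : Type*} [Field k] {n : ℕ} (w : Fin n → ℝ)
    (I : Ideal (MvPolynomial (Fin n) k)) : Ideal (MvPolynomial (Fin n) k) :=
  Ideal.span {g | ∃ f ∈ I, f ≠ 0 ∧ g = initForm w f}

def tropSet {k : Type*} [Field k] {n : ℕ} (I : Ideal (MvPolynomial (Fin n) k)) :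
    Set (Fin n → ℝ) :=
  {w | ∀ a : Fin n →₀ ℕ, monomial a (1 : k) ∉ initIdeal w I}

def gfCone {k : Type*} [Field k] {n : ℕ} (I : Ideal (MvPolynomial (Fin n) k))
    (w : Fin n → ℝ) : Set (Fin n → ℝ) :=
  closure {v | initIdeal v I = initIdeal w I}

def IsTermOrder {σ : Type*} (tle : (σ →₀ ℕ) → (σ →₀ ℕ) → Prop) : Prop :=
  IsLinearOrder (σ →₀ ℕ) tle ∧ (∀ a, tle 0 a) ∧
    (∀ a b c : σ →₀ ℕ, tle a b → tle (a + c) (b + c))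

def leadForm {k : Type*} [Field k] {σ : Type*} (tle : (σ →₀ ℕ) → (σ →₀ ℕ) → Prop)
    (f : MvPolynomial σ k) : MvPolynomial σ k :=
  ∑ b ∈ f.support.filter (fun b => ∀ a ∈ f.support, tle a b),
    monomial b (coeff b f)

def leadIdeal {k : Type*} [Field k] {σ : Type*} (tle : (σ →₀ ℕ) → (σ →₀ ℕ) → Prop)
    (I : Ideal (MvPolynomial σ k)) : Ideal (MvPolynomial σ k) :=
  Ideal.span {g | ∃ f ∈ I, f ≠ 0 ∧ g = leadForm tle f}

def Mdot {d n : ℕ} (M : Fin d → Fin n → ℚ) (a : Fin n →₀ ℕ) : Fin d → ℚ :=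
  fun t => ∑ j, M t j * (a j : ℚ)

def tildeValIs {k : Type*} [Field k] {d n : ℕ} (le : (Fin d → ℚ) → (Fin d → ℚ) → Prop)
    (M : Fin d → Fin n → ℚ) (f : MvPolynomial (Fin n) k) (v : Fin d → ℚ) : Prop :=
  (∃ b ∈ f.support, Mdot M b = v) ∧ ∀ a ∈ f.support, le (Mdot M a) v

def quasiValIs {k : Type*} [Field k] {d n : ℕ} (le : (Fin d → ℚ) → (Fin d → ℚ) → Prop)
    (M : Fin d → Fin n → ℚ) (I : Ideal (MvPolynomial (Fin n) k))
    (x : MvPolynomial (Fin n) k ⧸ I) (v : Fin d → ℚ) : Prop :=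
  (∃ f, f ≠ 0 ∧ Ideal.Quotient.mk I f = x ∧ tildeValIs le M f v) ∧
  (∀ f u, f ≠ 0 → Ideal.Quotient.mk I f = x → tildeValIs le M f u → le v u)

/-- The Newton–Okounkov body `Δ(A,ν) = closure conv {ν(f)/j : f ∈ A_j ∖ {0}, j ≥ 1}`. -/
def NObody {k : Type*} [Field k] {d n : ℕ} (I : Ideal (MvPolynomial (Fin n) k))
    (ν : (MvPolynomial (Fin n) k ⧸ I) → (Fin d → ℚ)) : Set (Fin d → ℝ) :=
  closure (convexHull ℝ {x | ∃ j : ℕ, 0 < j ∧ ∃ f : MvPolynomial (Fin n) k,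
    (∀ a ∈ f.support, (∑ i, a i) = j) ∧ Ideal.Quotient.mk I f ≠ 0 ∧
    x = (j : ℝ)⁻¹ • (fun t => (ν (Ideal.Quotient.mk I f) t : ℝ))})

/-- The `B`-Newton–Okounkov body `Δ_B(A) = conv {M·a/deg(a) : x^a a standard
monomial of positive degree}`. -/
def DeltaB {k : Type*} [Field k] {N n : ℕ} (I : Ideal (MvPolynomial (Fin n) k))
    (w₀ : Fin n → ℝ) (M : Fin N → Fin n → ℚ) : Set (Fin N → ℝ) :=
  convexHull ℝ {x | ∃ a : Fin n →₀ ℕ, monomial a (1 : k) ∉ initIdeal w₀ I ∧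
    0 < ∑ j, a j ∧
    x = ((∑ j, a j : ℕ) : ℝ)⁻¹ • (fun i => ∑ j, (M i j : ℝ) * (a j : ℝ))}

/-! ### Auxiliary lemmas -/

lemma exists_rel_max' {α β : Type*} (r : β → β → Prop) (htot : ∀ x y, r x y ∨ r y x)
    (htrans : ∀ x y z, r x y → r y z → r x z) (g : α → β) (s : Finset α) (hs : s.Nonempty) :
    ∃ b ∈ s, ∀ a ∈ s, r (g a) (g b) := by
  classical
  induction s using Finset.induction_on with
  | empty => exact absurd hs (by simp)
  | @insert a s ha ih =>
    rcases s.eq_empty_or_nonempty with rfl | hs'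
    · refine ⟨a, by simp, ?_⟩
      intro x hx
      simp only [Finset.mem_insert, Finset.notMem_empty, or_false] at hx
      subst hx
      rcases htot (g x) (g x) with h | h <;> exact h
    · obtain ⟨b, hb, hmax⟩ := ih hs'
      rcases htot (g a) (g b) with h | h
      · refine ⟨b, Finset.mem_insert_of_mem hb, ?_⟩
        intro x hx
        rcases Finset.mem_insert.mp hx with rfl | hx
        · exact h
        · exact hmax x hx
      · refine ⟨a, Finset.mem_insert_self a s, ?_⟩
        intro x hx
        rcases Finset.mem_insert.mp hx with rfl | hx
        · rcases htot (g x) (g x) with h' | h' <;> exact h'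
        · exact htrans _ _ _ (hmax x hx) h

lemma eq_single_of_sum_eq_one' {n : ℕ} {b : Fin n →₀ ℕ} (hb : ∑ i, b i = 1) :
    ∃ m, b = Finsupp.single m 1 := by
  obtain ⟨m, -, hm⟩ := Finset.exists_ne_zero_of_sum_ne_zero (by simp [hb] : ∑ i, b i ≠ 0)
  have h1 : b m = 1 := le_antisymm
    (hb ▸ Finset.single_le_sum (f := fun i => b i) (fun i _ => Nat.zero_le _) (Finset.mem_univ m))
    (Nat.one_le_iff_ne_zero.mpr hm)
  have hsum := Finset.add_sum_erase Finset.univ (fun i => b i) (Finset.mem_univ m)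
  have h0 : ∑ x ∈ Finset.univ.erase m, b x = 0 := by
    omega
  refine ⟨m, Finsupp.ext fun j => ?_⟩
  rcases eq_or_ne j m with rfl | h
  · simp [h1]
  · have := (Finset.sum_eq_zero_iff.mp h0) j (Finset.mem_erase.mpr ⟨h, Finset.mem_univ j⟩)
    simp [Finsupp.single_apply, Ne.symm h, this]

lemma leadForm_eq_monomial' {k : Type*} [Field k] {σ : Type*}
    {tle : (σ →₀ ℕ) → (σ →₀ ℕ) → Prop} (hterm : IsTermOrder tle)
    {g : MvPolynomial σ k} (hg : g ≠ 0) :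
    ∃ b ∈ g.support, leadForm tle g = monomial b (coeff b g) := by
  haveI := hterm.1
  obtain ⟨b, hb, hmax⟩ := exists_rel_max' tle (fun x y => total_of tle x y)
    (fun x y z hxy hyz => trans_of tle hxy hyz) id g.support (support_nonempty.mpr hg)
  refine ⟨b, hb, ?_⟩
  have hfil : g.support.filter (fun b' => ∀ a ∈ g.support, tle a b') = {b} := by
    ext c
    simp only [Finset.mem_filter, Finset.mem_singleton]
    constructor
    · rintro ⟨hc, hcall⟩
      exact antisymm (hmax c hc) (hcall b hb)
    · rintro rfl
      exact ⟨hb, hmax⟩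
  rw [leadForm, hfil, Finset.sum_singleton]

lemma no_linear_mem' {k : Type*} [Field k] {n : ℕ} {I : Ideal (MvPolynomial (Fin n) k)}
    {tle : (Fin n →₀ ℕ) → (Fin n →₀ ℕ) → Prop} (hterm : IsTermOrder tle)
    {w₀ : Fin n → ℝ} (hmono : initIdeal w₀ I = leadIdeal tle I)
    (hnovar : ∀ j : Fin n, X j ∉ initIdeal w₀ I)
    {g : MvPolynomial (Fin n) k} (hg : g ∈ I) (hdeg : ∀ a ∈ g.support, ∑ i', a i' = 1) :
    g = 0 := by
  by_contra hne
  obtain ⟨b, hb, hlf⟩ := leadForm_eq_monomial' hterm hne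
  obtain ⟨m, hbm⟩ := eq_single_of_sum_eq_one' (hdeg b hb)
  have hmem : (monomial b (coeff b g) : MvPolynomial (Fin n) k) ∈ leadIdeal tle I := by
    rw [← hlf]
    exact Ideal.subset_span ⟨g, hg, hne, rfl⟩
  have hc : coeff b g ≠ 0 := mem_support_iff.mp hb
  have hX : (X m : MvPolynomial (Fin n) k) ∈ leadIdeal tle I := by
    have h2 := Ideal.mul_mem_left _ (C (coeff b g)⁻¹) hmem
    rw [C_mul_monomial, inv_mul_cancel₀ hc, hbm] at h2
    exact h2
  exact hnovar m (hmono ▸ hX)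

theorem B_newton_polytope_projects_to_newton_okounkov_bodies
    {k : Type*} [Field k] [IsAlgClosed k] [CharZero k] {n N d q : ℕ}
    (I : Ideal (MvPolynomial (Fin n) k)) [IsDomain (MvPolynomial (Fin n) k ⧸ I)]
    -- `I` is homogeneous (standard grading):
    (hIhom : ∀ f ∈ I, ∀ j : ℕ, MvPolynomial.homogeneousComponent j f ∈ I)
    -- `A = S/I` has Krull dimension `d`:
    (hdim : ringKrullDim (MvPolynomial (Fin n) k ⧸ I) = d)
    -- `C = gfCone I w₀` is a maximal Gröbner cone, compatible with a term order:
    (tle : (Fin n →₀ ℕ) → (Fin n →₀ ℕ) → Prop) (hterm : IsTermOrder tle)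
    (w₀ : Fin n → ℝ) (hmono : initIdeal w₀ I = leadIdeal tle I)
    -- `init_C(I)` contains no variable:
    (hnovar : ∀ j : Fin n, X j ∉ initIdeal w₀ I)
    -- the rows of `M` (lineality generators and ray representatives) lie in `C`
    -- and together with the lineality space generate `C`:
    (M : Fin N → Fin n → ℚ)
    (hrows : ∀ i, (fun j => (M i j : ℝ)) ∈ gfCone I w₀)
    (hCgen : gfCone I w₀ = {x : Fin n → ℝ | ∃ l : Fin n → ℝ, initIdeal l I = I ∧
      ∃ c : Fin N → ℝ, (∀ i, 0 ≤ c i) ∧ x = l + ∑ i, c i • (fun j => (M i j : ℝ))})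
    -- `τ_1,…,τ_q` are maximal prime cones of `trop(I)`, `d`-dimensional faces of `C`:
    (w : Fin q → Fin n → ℝ)
    (hwtrop : ∀ i, w i ∈ tropSet (k := k) I)
    (hwprime : ∀ i, (initIdeal (w i) I).IsPrime)
    (hface : ∀ i, gfCone I (w i) ⊆ gfCone I w₀)
    (hτdim : ∀ i, Module.finrank ℝ ↥(Submodule.span ℝ (gfCone I (w i))) = d)
    -- for each `i`, the rows `ρ i 0, …, ρ i (d-1)` of `M` span `τ_i`:
    (ρ : Fin q → Fin d → Fin N) (hρ : ∀ i, Function.Injective (ρ i))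
    (hspan : ∀ i, Submodule.span ℝ (Set.range fun t => fun j => (M (ρ i t) j : ℝ)) =
      Submodule.span ℝ (gfCone I (w i)))
    -- a translation-invariant total order on `ℚ^d`:
    (le : (Fin d → ℚ) → (Fin d → ℚ) → Prop)
    (hlin : IsLinearOrder (Fin d → ℚ) le)
    (hcompat : ∀ u v x : Fin d → ℚ, le u v → le (u + x) (v + x))
    -- `ν_i` is the (Khovanskii-finite) valuation with weighting matrix the
    -- selected rows of `M`:
    (ν : Fin q → ((MvPolynomial (Fin n) k ⧸ I) → (Fin d → ℚ)))
    (hν : ∀ i x, x ≠ 0 → quasiValIs le (fun t j => M (ρ i t) j) I x (ν i x)) :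
    -- then the coordinate projection `p_i` maps `Δ_B(A)` onto `Δ(A,ν_i)`:
    ∀ i : Fin q,
      (fun x : Fin N → ℝ => fun t : Fin d => x (ρ i t)) '' DeltaB (k := k) I w₀ M =
        NObody I (ν i) := by
  classical
  haveI := hlin
  have degsum : ∀ a : Fin n →₀ ℕ, (∑ x ∈ a.support, a x) = ∑ j', a j' :=
    fun a => Finset.sum_subset (Finset.subset_univ _)
      (fun x _ hx => Finsupp.notMem_support_iff.mp hx)
  have hnl : ∀ g ∈ I, (∀ a ∈ g.support, ∑ i', a i' = 1) → g = 0 :=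
    fun g hg hd => no_linear_mem' hterm hmono hnovar hg hd
  intro i
  set Mi : Fin d → Fin n → ℚ := fun t j' => M (ρ i t) j' with hMi
  set vert : Fin n → (Fin d → ℝ) := fun l t => (M (ρ i t) l : ℝ) with hvert
  set P : Set (Fin d → ℝ) := convexHull ℝ (Set.range vert) with hPdef
  -- center-of-mass membership in `P`
  have hcm : ∀ b : Fin n →₀ ℕ, 0 < ∑ j', b j' →
      ((((∑ j', b j' : ℕ) : ℝ))⁻¹ • fun t => ∑ j', (M (ρ i t) j' : ℝ) * (b j' : ℝ)) ∈ P := by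
    intro b hpos
    have hw : ∑ l, (b l : ℝ) = ((∑ j', b j' : ℕ) : ℝ) := by push_cast; rfl
    have hx : ((((∑ j', b j' : ℕ) : ℝ))⁻¹ • fun t => ∑ j', (M (ρ i t) j' : ℝ) * (b j' : ℝ))
        = Finset.univ.centerMass (fun l => (b l : ℝ)) vert := by
      rw [Finset.centerMass, hw]
      congr 1
      funext t
      rw [Finset.sum_apply]
      exact Finset.sum_congr rfl fun l _ => by simp [hvert, mul_comm]
    rw [hx, hPdef]
    refine Finset.centerMass_mem_convexHull _ (fun l _ => by positivity) ?_
      (fun l _ => Set.mem_range_self l)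
    rw [hw]
    exact_mod_cast hpos
  -- the valuation of a nonzero homogeneous class is the weight of one of the
  -- exponents of a homogeneous representative
  have key : ∀ (f : MvPolynomial (Fin n) k) (j : ℕ),
      (∀ a ∈ f.support, ∑ i', a i' = j) → Ideal.Quotient.mk I f ≠ 0 →
      ∃ g : MvPolynomial (Fin n) k, Ideal.Quotient.mk I g = Ideal.Quotient.mk I f ∧ g ≠ 0 ∧
        (∀ a ∈ g.support, ∑ i', a i' = j) ∧
        ∃ b ∈ g.support, ν i (Ideal.Quotient.mk I f) = Mdot Mi b := by
    intro f j hdeg hne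
    obtain ⟨⟨h, hh0, hhmk, -, hmax⟩, hmin⟩ := hν i (Ideal.Quotient.mk I f) hne
    set g := homogeneousComponent j h with hgdef
    have hsuppg : ∀ b ∈ g.support, Finsupp.degree b = j ∧ b ∈ h.support := by
      intro b hb
      have hcb := mem_support_iff.mp hb
      rw [hgdef, coeff_homogeneousComponent] at hcb
      by_cases hbd : Finsupp.degree b = j
      · refine ⟨hbd, mem_support_iff.mpr ?_⟩
        simpa [hbd] using hcb
      · simp [hbd] at hcb
    have hfj : homogeneousComponent j f = f := by
      ext b
      rw [coeff_homogeneousComponent]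
      rcases eq_or_ne (coeff b f) 0 with h0 | h0
      · simp [h0]
      · have hbf : b ∈ f.support := mem_support_iff.mpr h0
        have hdb : Finsupp.degree b = ∑ j', b j' := degsum b
        have : Finsupp.degree b = j := by rw [hdb]; exact hdeg b hbf
        simp [this]
    have hgf : Ideal.Quotient.mk I g = Ideal.Quotient.mk I f := by
      rw [Ideal.Quotient.eq]
      have hhf : h - f ∈ I := Ideal.Quotient.eq.mp hhmk
      have hcomp := hIhom (h - f) hhf j
      rwa [map_sub, hfj] at hcomp
    have hg0 : g ≠ 0 := fun hz => hne (by rw [← hgf, hz, map_zero])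
    obtain ⟨b, hb, hbmax⟩ := exists_rel_max' le (fun x y => total_of le x y)
      (fun x y z hxy hyz => trans_of le hxy hyz) (Mdot Mi) g.support
      (support_nonempty.mpr hg0)
    have htv : tildeValIs le Mi g (Mdot Mi b) := ⟨⟨b, hb, rfl⟩, hbmax⟩
    have h1 : le (ν i (Ideal.Quotient.mk I f)) (Mdot Mi b) := hmin g _ hg0 hgf htv
    have h2 : le (Mdot Mi b) (ν i (Ideal.Quotient.mk I f)) := hmax b (hsuppg b hb).2
    refine ⟨g, hgf, hg0, ?_, b, hb, antisymm h1 h2⟩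
    intro a ha
    rw [← degsum a]
    exact (hsuppg a ha).1
  -- degree-one facts about the variables
  have hXdeg : ∀ l : Fin n, ∀ a ∈ (X l : MvPolynomial (Fin n) k).support, ∑ i', a i' = 1 := by
    intro l a ha
    rw [support_X] at ha
    simp only [Finset.mem_singleton] at ha
    subst ha
    simp [Finsupp.single_apply]
  have hXne : ∀ l : Fin n, Ideal.Quotient.mk I (X l) ≠ 0 := by
    intro l h0
    have hXI : (X l : MvPolynomial (Fin n) k) ∈ I := Ideal.Quotient.eq_zero_iff_mem.mp h0
    exact X_ne_zero l (hnl _ hXI (hXdeg l))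
  -- every vertex lies in the Newton–Okounkov body
  have hvertNO : ∀ l : Fin n, vert l ∈ NObody I (ν i) := by
    intro l
    obtain ⟨g, hgf, hg0, hgd, b, hb, hveq⟩ := key (X l) 1 (hXdeg l) (hXne l)
    have hgX : g = X l := by
      have hgXI : g - X l ∈ I := Ideal.Quotient.eq.mp hgf
      have hz : g - X l = 0 := by
        refine hnl _ hgXI ?_
        intro a ha
        have hmem := MvPolynomial.support_sub (Fin n) g (X l) ha
        rcases Finset.mem_union.mp hmem with hmem' | hmem'
        · exact hgd a hmem'
        · exact hXdeg l a hmem'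
      exact sub_eq_zero.mp hz
    have hbX : b = Finsupp.single l 1 := by
      rw [hgX, support_X] at hb
      simpa using hb
    have hval : ν i (Ideal.Quotient.mk I (X l)) = Mdot Mi (Finsupp.single l 1) := by
      rw [hveq, hbX]
    rw [NObody]
    apply subset_closure
    apply subset_convexHull
    refine ⟨1, one_pos, X l, by exact_mod_cast hXdeg l, hXne l, ?_⟩
    simp only [Nat.cast_one, inv_one, one_smul]
    funext t
    rw [hval]
    show (M (ρ i t) l : ℝ) = ((Mdot Mi (Finsupp.single l 1) t : ℚ) : ℝ)
    rw [Mdot]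
    simp [hMi, Finsupp.single_apply]
  -- the Newton–Okounkov body is contained in the polytope `P`
  have hNOP : NObody I (ν i) ⊆ P := by
    rw [NObody]
    refine closure_minimal (convexHull_min ?_ (convex_convexHull ℝ _))
      ((Set.finite_range vert).isClosed_convexHull (𝕜 := ℝ))
    rintro x ⟨j, hj, f, hdeg, hne, rfl⟩
    obtain ⟨g, hgf, hg0, hgd, b, hb, hveq⟩ := key f j hdeg hne
    have hbd : ∑ j', b j' = j := hgd b hb
    have hxe : ((j : ℝ)⁻¹ • fun t => ((ν i (Ideal.Quotient.mk I f) t : ℚ) : ℝ))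
        = ((((∑ j', b j' : ℕ) : ℝ))⁻¹ • fun t => ∑ j', (M (ρ i t) j' : ℝ) * (b j' : ℝ)) := by
      rw [hbd]
      congr 1
      funext t
      rw [hveq]
      show ((Mdot Mi b t : ℚ) : ℝ) = _
      rw [Mdot]
      push_cast [hMi]
      rfl
    rw [hxe]
    exact hcm b (hbd ▸ hj)
  -- the polytope `P` is contained in the Newton–Okounkov body
  have hPNO : P ⊆ NObody I (ν i) := by
    rw [hPdef]
    refine convexHull_min ?_ ?_
    · rintro x ⟨l, rfl⟩
      exact hvertNO l
    · rw [NObody]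
      exact (convex_convexHull ℝ _).closure
  -- the projection of `Δ_B(A)` equals `P`
  have himg : (fun x : Fin N → ℝ => fun t : Fin d => x (ρ i t)) '' DeltaB (k := k) I w₀ M
      = convexHull ℝ ((fun x : Fin N → ℝ => fun t : Fin d => x (ρ i t)) ''
          {x : Fin N → ℝ | ∃ a : Fin n →₀ ℕ, monomial a (1 : k) ∉ initIdeal w₀ I ∧
            0 < ∑ j, a j ∧
            x = ((∑ j, a j : ℕ) : ℝ)⁻¹ • (fun i' => ∑ j, (M i' j : ℝ) * (a j : ℝ))}) := by
    rw [DeltaB]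
    exact (LinearMap.funLeft ℝ ℝ (ρ i)).image_convexHull _
  have hPS : convexHull ℝ ((fun x : Fin N → ℝ => fun t : Fin d => x (ρ i t)) ''
          {x : Fin N → ℝ | ∃ a : Fin n →₀ ℕ, monomial a (1 : k) ∉ initIdeal w₀ I ∧
            0 < ∑ j, a j ∧
            x = ((∑ j, a j : ℕ) : ℝ)⁻¹ • (fun i' => ∑ j, (M i' j : ℝ) * (a j : ℝ))}) = P := by
    apply Set.Subset.antisymm
    · refine convexHull_min ?_ (convex_convexHull ℝ _)
      rintro y ⟨x, ⟨a, -, hpos, rfl⟩, rfl⟩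
      exact hcm a hpos
    · rw [hPdef]
      apply convexHull_mono
      rintro y ⟨l, rfl⟩
      refine ⟨(fun i' => (M i' l : ℝ)), ⟨Finsupp.single l 1, ?_, ?_, ?_⟩, rfl⟩
      · exact hnovar l
      · simp [Finsupp.single_apply]
      · funext i'
        simp [Finsupp.single_apply]
  rw [himg, hPS]
  exact Set.Subset.antisymm hPNO hNOP
end
end

section
/- Let I ⊆ S = k[x_1,…,x_n] be a homogeneous ideal, A = S/I, C a maximal cone in the Gröbner fan GF(I) with associated term order <, and M an (n_C × n)-matrix whose rows r_1,…,r_{n_C} ∈ C project to the primitive ray generators of C modulo the lineality space L_I; let Ĩ_M ⊆ S[t_1,…,t_{n_C}] be the lifted ideal and Ã_M := S[t_1,…,t_{n_C}]/Ĩ_M the lifted algebra. Then: (i) Ã_M is a free k[t_1,…,t_{n_C}]-module with basis the standard monomial basis B_C of A with respect to init_C(I); (ii) for every face τ of C there exists a point a_τ ∈ k^{n_C} such that the specialization of Ã_M at t = a_τ (i.e. the quotient of Ã_M by the ideal generated by t_i − (a_τ)_i, i = 1,…,n_C) is isomorphic to S/init_τ(I); in particular the generic fibers of the family Spec(Ã_M)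 → A^{n_C} are isomorphic to Spec(A) and there exist special fibers Spec(S/init_τ(I)) for every proper face τ of C. -/
/- STATEMENT 17 (BMN, Thm 3.14): for a maximal Gröbner cone `C` of a homogeneous
ideal `I` and a matrix `M` of integral representatives of the ray generators of `C`
mod lineality, the lifted algebra `Ã_M = S[t_1,…,t_N]/Ĩ_M` is a free module over
`k[t_1,…,t_N]` with basis the standard monomials for `init_C(I)`, and for every
face `τ` of `C` (encoded by a point `w₁ ∈ C`) there is a point `a_τ ∈ k^N` such that
the fiber of the family at `a_τ` is `S/init_τ(I)`. -/

open MvPolynomial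
open scoped Classical

noncomputable section

def rdotZ {n : ℕ} (r : Fin n → ℤ) (a : Fin n →₀ ℕ) : ℤ := ∑ j, r j * (a j : ℤ)

def muM {k : Type*} [Field k] {N n : ℕ} (M : Fin N → Fin n → ℤ)
    (f : MvPolynomial (Fin n) k) (i : Fin N) : ℤ :=
  WithBot.unbotD 0 ((f.support.image fun a => rdotZ (M i) a).max)

def liftExp {k : Type*} [Field k] {N n : ℕ} (M : Fin N → Fin n → ℤ)
    (f : MvPolynomial (Fin n) k) (a : Fin n →₀ ℕ) : (Fin n ⊕ Fin N) →₀ ℕ :=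
  Finsupp.equivFunOnFinite.symm
    (Sum.elim (fun j => a j) (fun i => (muM M f i - rdotZ (M i) a).toNat))

def liftPoly {k : Type*} [Field k] {N n : ℕ} (M : Fin N → Fin n → ℤ)
    (f : MvPolynomial (Fin n) k) : MvPolynomial (Fin n ⊕ Fin N) k :=
  ∑ a ∈ f.support, monomial (liftExp M f a) (coeff a f)

def liftIdeal {k : Type*} [Field k] {N n : ℕ} (M : Fin N → Fin n → ℤ)
    (I : Ideal (MvPolynomial (Fin n) k)) : Ideal (MvPolynomial (Fin n ⊕ Fin N) k) :=
  Ideal.span {g | ∃ f ∈ I, g = liftPoly M f}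


/-! ### Auxiliary machinery -/

section Aux

variable {k : Type*} [Field k] {n : ℕ}

/-- Coefficient of a "filtered monomial sum". -/
lemma coeff_filterSum {σ : Type*} (p : MvPolynomial σ k) (P : (σ →₀ ℕ) → Prop)
    [DecidablePred P] (e : σ →₀ ℕ) :
    coeff e (∑ b ∈ p.support.filter P, monomial b (coeff b p)) =
      if P e then coeff e p else 0 := by
  classical
  rw [MvPolynomial.coeff_sum]
  simp only [coeff_monomial]
  rw [Finset.sum_ite_eq' (p.support.filter P) e (fun b => coeff b p)]
  by_cases he : e ∈ p.support
  · by_cases hP : P e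
    · rw [if_pos (Finset.mem_filter.2 ⟨he, hP⟩), if_pos hP]
    · rw [if_neg (fun h => hP (Finset.mem_filter.1 h).2), if_neg hP]
  · rw [MvPolynomial.notMem_support_iff.1 he]
    split_ifs with h1 h2 <;> rfl

section TermOrder

variable {tle : (Fin n →₀ ℕ) → (Fin n →₀ ℕ) → Prop}

lemma IsTermOrder.tle_of_le (h : IsTermOrder tle) {a b : Fin n →₀ ℕ} (hab : a ≤ b) :
    tle a b := by
  have h2 := h.2.2 0 (b - a) a (h.2.1 (b - a))
  rwa [zero_add, tsub_add_cancel_of_le hab] at h2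

lemma IsTermOrder.exists_max (h : IsTermOrder tle) (s : Finset (Fin n →₀ ℕ))
    (hs : s.Nonempty) : ∃ b ∈ s, ∀ a ∈ s, tle a b := by
  classical
  haveI : IsLinearOrder _ tle := h.1
  induction hs using Finset.Nonempty.cons_induction with
  | singleton x =>
    refine ⟨x, by simp, ?_⟩
    intro a ha
    simp only [Finset.mem_singleton] at ha
    subst ha; exact refl_of tle _
  | cons x s hx hsne ih =>
    obtain ⟨b, hb, hball⟩ := ih
    rcases total_of tle x b with h1 | h1
    · refine ⟨b, Finset.mem_cons_of_mem hb, ?_⟩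
      intro a ha
      rcases Finset.mem_cons.1 ha with rfl | ha
      · exact h1
      · exact hball a ha
    · refine ⟨x, Finset.mem_cons_self _ _, ?_⟩
      intro a ha
      rcases Finset.mem_cons.1 ha with rfl | ha
      · exact refl_of tle a
      · exact trans_of tle (hball a ha) h1

lemma IsTermOrder.wf (h : IsTermOrder tle) :
    WellFounded (fun a b : Fin n →₀ ℕ => tle a b ∧ ¬ tle b a) := by
  haveI : IsLinearOrder _ tle := h.1
  have hp : (Set.univ : Set (Fin n →₀ ℕ)).PartiallyWellOrderedOn tle := by
    intro f
    obtain ⟨m, m', hmm', hle⟩ := Set.isPWO_of_wellQuasiOrderedLE (Set.univ : Set (Fin n →₀ ℕ)) f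
    exact ⟨m, m', hmm', h.tle_of_le hle⟩
  exact Set.wellFoundedOn_univ.mp hp.wellFoundedOn

lemma IsTermOrder.tlt_of_ne (h : IsTermOrder tle) {a b : Fin n →₀ ℕ}
    (hab : tle a b) (hne : a ≠ b) : tle a b ∧ ¬ tle b a := by
  haveI : IsLinearOrder _ tle := h.1
  exact ⟨hab, fun hba => hne (antisymm hab hba)⟩

end TermOrder

section InitForm

lemma coeff_initForm (w : Fin n → ℝ) (f : MvPolynomial (Fin n) k) (e : Fin n →₀ ℕ) :
    coeff e (initForm w f) =
      if (∀ a ∈ f.support, wdot w a ≤ wdot w e) then coeff e f else 0 := by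
  rw [initForm]
  exact coeff_filterSum f (fun b => ∀ a ∈ f.support, wdot w a ≤ wdot w b) e

lemma mem_support_initForm_iff {w : Fin n → ℝ} {f : MvPolynomial (Fin n) k}
    {e : Fin n →₀ ℕ} :
    e ∈ (initForm w f).support ↔
      e ∈ f.support ∧ ∀ a ∈ f.support, wdot w a ≤ wdot w e := by
  classical
  rw [MvPolynomial.mem_support_iff, coeff_initForm]
  split_ifs with h
  · rw [← MvPolynomial.mem_support_iff]; tauto
  · tauto

lemma initForm_ne_zero {w : Fin n → ℝ} {f : MvPolynomial (Fin n) k} (hf : f ≠ 0) :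
    initForm w f ≠ 0 := by
  classical
  obtain ⟨b, hb, hmax⟩ := f.support.exists_max_image (wdot w)
    (MvPolynomial.support_nonempty.2 hf)
  intro h0
  have : coeff b (initForm w f) = coeff b f := by
    rw [coeff_initForm, if_pos hmax]
  rw [h0] at this
  exact (MvPolynomial.mem_support_iff.1 hb) this.symm

lemma initForm_C_mul {w : Fin n → ℝ} {f : MvPolynomial (Fin n) k} {c : k} (hc : c ≠ 0) :
    initForm w (C c * f) = C c * initForm w f := by
  classical
  have hsupp : (C c * f).support = f.support := by
    ext e
    simp only [MvPolynomial.mem_support_iff, MvPolynomial.coeff_C_mul]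
    exact ⟨fun h h0 => h (by rw [h0, mul_zero]), fun h => mul_ne_zero hc h⟩
  ext e
  rw [MvPolynomial.coeff_C_mul, coeff_initForm, coeff_initForm, hsupp,
    MvPolynomial.coeff_C_mul]
  split_ifs <;> simp

end InitForm

section LeadForm

variable {tle : (Fin n →₀ ℕ) → (Fin n →₀ ℕ) → Prop}

lemma coeff_leadForm (f : MvPolynomial (Fin n) k) (e : Fin n →₀ ℕ) :
    coeff e (leadForm tle f) =
      if (∀ a ∈ f.support, tle a e) then coeff e f else 0 := by
  rw [leadForm]
  exact coeff_filterSum f (fun b => ∀ a ∈ f.support, tle a b) e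

lemma leadForm_eq_monomial (h : IsTermOrder tle) (f : MvPolynomial (Fin n) k)
    (b : Fin n →₀ ℕ) (hb : b ∈ f.support) (hmax : ∀ a ∈ f.support, tle a b) :
    leadForm tle f = monomial b (coeff b f) := by
  classical
  haveI : IsLinearOrder _ tle := h.1
  ext e
  rw [coeff_leadForm, MvPolynomial.coeff_monomial]
  by_cases h2 : b = e
  · subst h2; rw [if_pos hmax, if_pos rfl]
  · rw [if_neg h2]
    by_cases h1 : ∀ a ∈ f.support, tle a e
    · rw [if_pos h1]
      by_cases he : e ∈ f.support
      · exact absurd (antisymm (hmax e he) (h1 b hb)).symm h2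
      · exact MvPolynomial.notMem_support_iff.1 he
    · rw [if_neg h1]

end LeadForm


section Lead

variable {tle : (Fin n →₀ ℕ) → (Fin n →₀ ℕ) → Prop} {I : Ideal (MvPolynomial (Fin n) k)}

lemma mon_lm_mem (h : IsTermOrder tle) {f : MvPolynomial (Fin n) k}
    (hf : f ∈ I) (hf0 : f ≠ 0) {b : Fin n →₀ ℕ} (hb : b ∈ f.support)
    (hmax : ∀ a ∈ f.support, tle a b) :
    monomial b (1 : k) ∈ leadIdeal tle I := by
  have h1 : leadForm tle f ∈ leadIdeal tle I :=
    Ideal.subset_span ⟨f, hf, hf0, rfl⟩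
  rw [leadForm_eq_monomial h f b hb hmax] at h1
  have h2 : monomial b (1:k) = C (coeff b f)⁻¹ * monomial b (coeff b f) := by
    rw [C_mul_monomial, inv_mul_cancel₀ (MvPolynomial.mem_support_iff.1 hb)]
  rw [h2]
  exact Ideal.mul_mem_left _ _ h1

lemma support_mem_leadIdeal (h : IsTermOrder tle) {p : MvPolynomial (Fin n) k}
    (hp : p ∈ leadIdeal tle I) {e : Fin n →₀ ℕ} (he : e ∈ p.support) :
    ∃ u f b, f ∈ I ∧ f ≠ 0 ∧ b ∈ f.support ∧ (∀ a ∈ f.support, tle a b) ∧ e = u + b := by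
  classical
  have hp' : p ∈ Submodule.span (MvPolynomial (Fin n) k)
      {g | ∃ f ∈ I, f ≠ 0 ∧ g = leadForm tle f} := hp
  obtain ⟨c, hcsub, hcsum⟩ := Submodule.mem_span_set.1 hp'
  rw [← hcsum] at he
  rw [Finsupp.sum] at he
  have he' := MvPolynomial.support_sum he
  rw [Finset.mem_biUnion] at he'
  obtain ⟨g, hgc, hg⟩ := he'
  have hmul : e ∈ (c g * g).support := by
    simpa [smul_eq_mul] using hg
  have := MvPolynomial.support_mul _ _ hmul
  rw [Finset.mem_add] at this
  obtain ⟨u, hu, v, hv, rfl⟩ := this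
  obtain ⟨f, hfI, hf0, rfl⟩ := hcsub hgc
  rw [MvPolynomial.mem_support_iff, coeff_leadForm] at hv
  by_cases hcond : ∀ a ∈ f.support, tle a v
  · rw [if_pos hcond] at hv
    exact ⟨u, f, v, hfI, hf0, MvPolynomial.mem_support_iff.2 hv, hcond, rfl⟩
  · rw [if_neg hcond] at hv; exact absurd rfl hv

lemma mon_mem_of_support (h : IsTermOrder tle) {p : MvPolynomial (Fin n) k}
    (hp : p ∈ leadIdeal tle I) {e : Fin n →₀ ℕ} (he : e ∈ p.support) :
    monomial e (1:k) ∈ leadIdeal tle I := by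
  obtain ⟨u, f, b, hfI, hf0, hb, hmax, rfl⟩ := support_mem_leadIdeal h hp he
  have h1 := mon_lm_mem h hfI hf0 hb hmax
  have h2 : monomial (u+b) (1:k) = monomial u (1:k) * monomial b (1:k) := by
    rw [MvPolynomial.monomial_mul, one_mul]
  rw [h2]
  exact Ideal.mul_mem_left _ _ h1

lemma exists_lm_rep (h : IsTermOrder tle) {e : Fin n →₀ ℕ}
    (he : monomial e (1:k) ∈ leadIdeal tle I) :
    ∃ g, g ∈ I ∧ coeff e g = 1 ∧ (∀ a ∈ g.support, tle a e) := by
  classical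
  have hsupp : e ∈ (monomial e (1:k)).support := by
    rw [MvPolynomial.mem_support_iff, MvPolynomial.coeff_monomial, if_pos rfl]
    exact one_ne_zero
  obtain ⟨u, f, b, hfI, hf0, hb, hmax, rfl⟩ := support_mem_leadIdeal h he hsupp
  have hcb : coeff b f ≠ 0 := MvPolynomial.mem_support_iff.1 hb
  have hcoeff : ∀ a, coeff a (C (coeff b f)⁻¹ * (monomial u 1 * f)) =
      (coeff b f)⁻¹ * (if u ≤ a then coeff (a - u) f else 0) := by
    intro a
    rw [MvPolynomial.coeff_C_mul, MvPolynomial.coeff_monomial_mul']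
    simp
  refine ⟨C (coeff b f)⁻¹ * (monomial u 1 * f),
    Ideal.mul_mem_left _ _ (Ideal.mul_mem_left _ _ hfI), ?_, ?_⟩
  · rw [hcoeff, if_pos (le_add_right le_rfl), add_tsub_cancel_left,
      inv_mul_cancel₀ hcb]
  · intro a ha
    rw [MvPolynomial.mem_support_iff, hcoeff] at ha
    by_cases hule : u ≤ a
    · rw [if_pos hule] at ha
      have hav : a - u ∈ f.support := by
        rw [MvPolynomial.mem_support_iff]
        intro h0; rw [h0, mul_zero] at ha; exact ha rfl
      have h1 : tle (a - u) b := hmax _ hav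
      have h2 := h.2.2 (a - u) b u h1
      rwa [tsub_add_cancel_of_le hule, add_comm b u] at h2
    · rw [if_neg hule, mul_zero] at ha; exact absurd rfl ha

lemma gm_exists (h : IsTermOrder tle) {m : Fin n →₀ ℕ}
    (hm : monomial m (1:k) ∈ leadIdeal tle I) :
    ∃ g : MvPolynomial (Fin n) k, g ∈ I ∧ coeff m g = 1 ∧ (∀ a ∈ g.support, tle a m) ∧
      (∀ a ∈ g.support, a ≠ m → monomial a (1:k) ∉ leadIdeal tle I) := by
  classical
  haveI : IsLinearOrder _ tle := h.1
  set P : (Fin n →₀ ℕ) → Prop := fun b => ∀ g : MvPolynomial (Fin n) k, g ∈ I →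
    coeff m g = 1 → (∀ a ∈ g.support, tle a m) →
    (∀ a ∈ g.support, a ≠ m → monomial a (1:k) ∈ leadIdeal tle I → tle a b) →
    ∃ g' : MvPolynomial (Fin n) k, g' ∈ I ∧ coeff m g' = 1 ∧ (∀ a ∈ g'.support, tle a m) ∧
      (∀ a ∈ g'.support, a ≠ m → monomial a (1:k) ∉ leadIdeal tle I) with hP
  have step : ∀ x, (∀ y, (tle y x ∧ ¬ tle x y) → P y) → P x := by
    intro x IH g hinI hcm hle hbd
    by_cases hbad : ∃ a ∈ g.support, a ≠ m ∧ monomial a (1:k) ∈ leadIdeal tle I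
    · set S := g.support.filter (fun a => a ≠ m ∧ monomial a (1:k) ∈ leadIdeal tle I) with hS
      have hSne : S.Nonempty := by
        obtain ⟨a, ha, h1, h2⟩ := hbad
        exact ⟨a, Finset.mem_filter.2 ⟨ha, h1, h2⟩⟩
      obtain ⟨b₀, hb₀S, hb₀max⟩ := h.exists_max S hSne
      obtain ⟨hb₀g, hb₀m, hb₀lead⟩ := Finset.mem_filter.1 hb₀S
      obtain ⟨q, hqI, hqc, hqle⟩ := exists_lm_rep h hb₀lead
      set g' := g - C (coeff b₀ g) * q with hg'
      have hg'I : g' ∈ I := Ideal.sub_mem _ hinI (Ideal.mul_mem_left _ _ hqI)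
      have hcoeff : ∀ a, coeff a g' = coeff a g - coeff b₀ g * coeff a q := by
        intro a
        rw [hg', MvPolynomial.coeff_sub, MvPolynomial.coeff_C_mul]
      have hqm : coeff m q = 0 := by
        by_contra hq0
        have hminsupp : m ∈ q.support := MvPolynomial.mem_support_iff.2 hq0
        exact hb₀m (antisymm (hle b₀ hb₀g) (hqle m hminsupp))
      have hcm' : coeff m g' = 1 := by rw [hcoeff, hqm, mul_zero, sub_zero, hcm]
      have hb₀g' : coeff b₀ g' = 0 := by rw [hcoeff, hqc, mul_one, sub_self]
      have hsupp' : ∀ a ∈ g'.support, a ∈ g.support ∨ a ∈ q.support := by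
        intro a ha
        by_contra hcon
        push_neg at hcon
        rw [MvPolynomial.mem_support_iff, hcoeff,
          MvPolynomial.notMem_support_iff.1 hcon.1,
          MvPolynomial.notMem_support_iff.1 hcon.2, mul_zero, sub_zero] at ha
        exact ha rfl
      have hle' : ∀ a ∈ g'.support, tle a m := by
        intro a ha
        rcases hsupp' a ha with h1 | h1
        · exact hle a h1
        · exact trans_of tle (hqle a h1) (hle b₀ hb₀g)
      by_cases hbad' : ∃ a ∈ g'.support, a ≠ m ∧ monomial a (1:k) ∈ leadIdeal tle I
      · set S' := g'.support.filter
          (fun a => a ≠ m ∧ monomial a (1:k) ∈ leadIdeal tle I) with hS'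
        have hS'ne : S'.Nonempty := by
          obtain ⟨a, ha, h1, h2⟩ := hbad'
          exact ⟨a, Finset.mem_filter.2 ⟨ha, h1, h2⟩⟩
        obtain ⟨b₁, hb₁S, hb₁max⟩ := h.exists_max S' hS'ne
        obtain ⟨hb₁g, hb₁m, hb₁lead⟩ := Finset.mem_filter.1 hb₁S
        have hb₁b₀ : tle b₁ b₀ := by
          rcases hsupp' b₁ hb₁g with h1 | h1
          · exact hb₀max b₁ (Finset.mem_filter.2 ⟨h1, hb₁m, hb₁lead⟩)
          · exact hqle b₁ h1
        have hb₁ne : b₁ ≠ b₀ := by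
          intro hcon
          rw [hcon] at hb₁g
          exact MvPolynomial.mem_support_iff.1 hb₁g hb₀g'
        have hb₀x : tle b₀ x := hbd b₀ hb₀g hb₀m hb₀lead
        have hrel : tle b₁ x ∧ ¬ tle x b₁ := by
          refine ⟨trans_of tle hb₁b₀ hb₀x, fun hxb₁ => ?_⟩
          exact hb₁ne (antisymm hb₁b₀ (trans_of tle hb₀x hxb₁))
        refine IH b₁ hrel g' hg'I hcm' hle' ?_
        intro a ha hne hmem
        exact hb₁max a (Finset.mem_filter.2 ⟨ha, hne, hmem⟩)
      · refine ⟨g', hg'I, hcm', hle', ?_⟩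
        intro a ha hne hmem
        exact hbad' ⟨a, ha, hne, hmem⟩
    · refine ⟨g, hinI, hcm, hle, ?_⟩
      intro a ha hne hmem
      exact hbad ⟨a, ha, hne, hmem⟩
  have main : ∀ b, P b := fun b => (IsTermOrder.wf h).induction (C := P) b step
  obtain ⟨q, hqI, hqc, hqle⟩ := exists_lm_rep h hm
  exact main m q hqI hqc hqle (fun a ha _ _ => hqle a ha)

end Lead

section Wdot

lemma wdot_add (u v : Fin n → ℝ) (a : Fin n →₀ ℕ) :
    wdot (u + v) a = wdot u a + wdot v a := by
  simp [wdot, add_mul, Finset.sum_add_distrib]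

lemma wdot_sum {ι : Type*} (s : Finset ι) (g : ι → (Fin n → ℝ)) (a : Fin n →₀ ℕ) :
    wdot (∑ i ∈ s, g i) a = ∑ i ∈ s, wdot (g i) a := by
  simp only [wdot, Finset.sum_apply, Finset.sum_mul]
  exact Finset.sum_comm

lemma wdot_smul (c : ℝ) (u : Fin n → ℝ) (a : Fin n →₀ ℕ) :
    wdot (c • u) a = c * wdot u a := by
  simp [wdot, Finset.mul_sum, mul_assoc]

lemma wdot_cast (r : Fin n → ℤ) (a : Fin n →₀ ℕ) :
    wdot (fun j => (r j : ℝ)) a = (rdotZ r a : ℝ) := by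
  rw [wdot, rdotZ]
  push_cast
  rfl

end Wdot

section Crux

variable {tle : (Fin n →₀ ℕ) → (Fin n →₀ ℕ) → Prop} {I : Ideal (MvPolynomial (Fin n) k)}
variable {w₀ : Fin n → ℝ}

/-- The crux lemma: for any `v` in the closed Gröbner cone, the distinguished
monomial `m` of a reduced representative maximizes the `v`-weight on its support. -/
lemma crux (hterm : IsTermOrder tle) (hmono : initIdeal w₀ I = leadIdeal tle I)
    {m : Fin n →₀ ℕ} {G : MvPolynomial (Fin n) k}
    (hGI : G ∈ I) (hGc : coeff m G = 1)
    (hGred : ∀ a ∈ G.support, a ≠ m → monomial a (1:k) ∉ leadIdeal tle I)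
    {v : Fin n → ℝ} (hv : v ∈ gfCone I w₀) :
    ∀ a ∈ G.support, wdot v a ≤ wdot v m := by
  classical
  have hG0 : G ≠ 0 := by
    intro h0
    rw [h0, MvPolynomial.coeff_zero] at hGc
    exact one_ne_zero hGc.symm
  have hclosed : IsClosed {u : Fin n → ℝ | ∀ a ∈ G.support, wdot u a ≤ wdot u m} := by
    have heq : {u : Fin n → ℝ | ∀ a ∈ G.support, wdot u a ≤ wdot u m} =
        ⋂ a ∈ G.support, {u : Fin n → ℝ | wdot u a ≤ wdot u m} := by
      ext u; simp [Set.mem_iInter]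
    rw [heq]
    refine isClosed_biInter (fun a _ => ?_)
    have hcont : ∀ b : Fin n →₀ ℕ, Continuous (fun u : Fin n → ℝ => wdot u b) := by
      intro b
      unfold wdot
      exact continuous_finset_sum _ (fun i _ => (continuous_apply i).mul continuous_const)
    exact isClosed_le (hcont a) (hcont m)
  have hbase : {u : Fin n → ℝ | initIdeal u I = initIdeal w₀ I} ⊆
      {u : Fin n → ℝ | ∀ a ∈ G.support, wdot u a ≤ wdot u m} := by
    intro u hu
    have h1 : initForm u G ∈ initIdeal u I := Ideal.subset_span ⟨G, hGI, hG0, rfl⟩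
    rw [Set.mem_setOf_eq] at hu
    rw [hu, hmono] at h1
    have h2 : initForm u G ≠ 0 := initForm_ne_zero hG0
    obtain ⟨e, he⟩ := MvPolynomial.support_nonempty.2 h2
    have he' := mem_support_initForm_iff.1 he
    have hem : e = m := by
      by_contra hne
      exact hGred e he'.1 hne (mon_mem_of_support hterm h1 he)
    subst hem
    exact he'.2
  exact closure_minimal hbase hclosed hv

/-- On the lineality space, a reduced representative has constant weight on its support. -/
lemma flat (hterm : IsTermOrder tle)
    {m : Fin n →₀ ℕ} {G : MvPolynomial (Fin n) k}
    (hGI : G ∈ I) (hGc : coeff m G = 1)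
    (hGred : ∀ a ∈ G.support, a ≠ m → monomial a (1:k) ∉ leadIdeal tle I)
    {l : Fin n → ℝ} (hlI : initIdeal l I = I)
    (hle : ∀ a ∈ G.support, wdot l a ≤ wdot l m) :
    ∀ a ∈ G.support, wdot l a = wdot l m := by
  classical
  intro a ha
  refine le_antisymm (hle a ha) ?_
  by_contra hlt
  push_neg at hlt
  have hmG : m ∈ G.support := by
    rw [MvPolynomial.mem_support_iff, hGc]; exact one_ne_zero
  have hpI : initForm l G ∈ I := by
    have h1 : initForm l G ∈ initIdeal l I :=
      Ideal.subset_span ⟨G, hGI, fun h0 => by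
        rw [h0, MvPolynomial.coeff_zero] at hGc; exact one_ne_zero hGc.symm, rfl⟩
    rwa [hlI] at h1
  have hdI : G - initForm l G ∈ I := Ideal.sub_mem _ hGI hpI
  have hcoeffd : ∀ e, coeff e (G - initForm l G) =
      if (∀ a' ∈ G.support, wdot l a' ≤ wdot l e) then 0 else coeff e G := by
    intro e
    rw [MvPolynomial.coeff_sub, coeff_initForm]
    split_ifs <;> ring
  have hcm : coeff m (G - initForm l G) = 0 := by rw [hcoeffd, if_pos hle]
  have hane : coeff a (G - initForm l G) ≠ 0 := by
    rw [hcoeffd, if_neg]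
    · exact MvPolynomial.mem_support_iff.1 ha
    · intro hcon
      exact absurd (hcon m hmG) (not_le.2 hlt)
  have hd0 : G - initForm l G ≠ 0 := fun h0 => hane (by rw [h0, MvPolynomial.coeff_zero])
  obtain ⟨b, hb, hbmax⟩ := hterm.exists_max _ (MvPolynomial.support_nonempty.2 hd0)
  have hbG : b ∈ G.support := by
    have := MvPolynomial.mem_support_iff.1 hb
    rw [hcoeffd] at this
    rw [MvPolynomial.mem_support_iff]
    split_ifs at this with hsp
    · exact absurd rfl this
    · exact this
  have hbm : b ≠ m := by
    intro hc
    subst hc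
    exact MvPolynomial.mem_support_iff.1 hb hcm
  exact hGred b hbG hbm (mon_lm_mem hterm hdI hd0 hb hbmax)

lemma initForm_congr (w w' : Fin n → ℝ) (g : MvPolynomial (Fin n) k)
    (hiff : ∀ e ∈ g.support, ((∀ a ∈ g.support, wdot w a ≤ wdot w e) ↔
      (∀ a ∈ g.support, wdot w' a ≤ wdot w' e))) :
    initForm w g = initForm w' g := by
  classical
  ext e
  rw [coeff_initForm, coeff_initForm]
  by_cases he : e ∈ g.support
  · rw [if_congr (hiff e he) rfl rfl]
  · have h0 : coeff e g = 0 := MvPolynomial.notMem_support_iff.1 he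
    rw [h0]
    split_ifs <;> rfl

end Crux

section Comb

/-- Combination lemma, case where `g'` has strictly smaller weights. -/
lemma initForm_comb_lt (w : Fin n → ℝ) {G g' : MvPolynomial (Fin n) k} {b : Fin n →₀ ℕ}
    {c : k} (hc : c ≠ 0) (hGb : coeff b G ≠ 0)
    (hGmax : ∀ a ∈ G.support, wdot w a ≤ wdot w b)
    (hlt : ∀ a ∈ g'.support, wdot w a < wdot w b) :
    initForm w (C c * G + g') = C c * initForm w G := by
  classical
  have hcoeffg : ∀ e, coeff e (C c * G + g') = c * coeff e G + coeff e g' := by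
    intro e; rw [MvPolynomial.coeff_add, MvPolynomial.coeff_C_mul]
  have hsupp : ∀ a ∈ (C c * G + g').support, a ∈ G.support ∨ a ∈ g'.support := by
    intro a ha
    by_contra hcon
    push_neg at hcon
    rw [MvPolynomial.mem_support_iff, hcoeffg, MvPolynomial.notMem_support_iff.1 hcon.1,
      MvPolynomial.notMem_support_iff.1 hcon.2, mul_zero, add_zero] at ha
    exact ha rfl
  have hbg' : coeff b g' = 0 := by
    by_contra h0
    exact absurd (hlt b (MvPolynomial.mem_support_iff.2 h0)) (lt_irrefl _)
  have hbin : b ∈ (C c * G + g').support := by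
    rw [MvPolynomial.mem_support_iff, hcoeffg, hbg', add_zero]
    exact mul_ne_zero hc hGb
  ext e
  rw [coeff_initForm, MvPolynomial.coeff_C_mul, coeff_initForm]
  have hcondg : (∀ a ∈ (C c * G + g').support, wdot w a ≤ wdot w e) ↔
      wdot w b ≤ wdot w e := by
    constructor
    · intro h; exact h b hbin
    · intro h a ha
      rcases hsupp a ha with h1 | h1
      · exact le_trans (hGmax a h1) h
      · exact le_trans (le_of_lt (hlt a h1)) h
  have hcondG : (∀ a ∈ G.support, wdot w a ≤ wdot w e) ↔ wdot w b ≤ wdot w e := by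
    constructor
    · intro h; exact h b (MvPolynomial.mem_support_iff.2 hGb)
    · intro h a ha; exact le_trans (hGmax a ha) h
  rw [if_congr hcondg rfl rfl, if_congr hcondG rfl rfl]
  by_cases hcond : wdot w b ≤ wdot w e
  · rw [if_pos hcond, if_pos hcond, hcoeffg]
    have hg'e : coeff e g' = 0 := by
      by_contra h0
      exact absurd (lt_of_lt_of_le (hlt e (MvPolynomial.mem_support_iff.2 h0)) hcond)
        (lt_irrefl _)
    rw [hg'e, add_zero]
  · rw [if_neg hcond, if_neg hcond, mul_zero]

/-- Combination lemma, case where `g'` has equal top weight. -/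
lemma initForm_comb_eq (w : Fin n → ℝ) {G g' : MvPolynomial (Fin n) k} {b : Fin n →₀ ℕ}
    {c : k} (hbin : b ∈ (C c * G + g').support) (hGb : coeff b G ≠ 0)
    (hGmax : ∀ a ∈ G.support, wdot w a ≤ wdot w b)
    (hle : ∀ a ∈ g'.support, wdot w a ≤ wdot w b)
    (hwit : ∃ a ∈ g'.support, wdot w a = wdot w b) :
    initForm w (C c * G + g') = C c * initForm w G + initForm w g' := by
  classical
  have hcoeffg : ∀ e, coeff e (C c * G + g') = c * coeff e G + coeff e g' := by
    intro e; rw [MvPolynomial.coeff_add, MvPolynomial.coeff_C_mul]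
  have hsupp : ∀ a ∈ (C c * G + g').support, a ∈ G.support ∨ a ∈ g'.support := by
    intro a ha
    by_contra hcon
    push_neg at hcon
    rw [MvPolynomial.mem_support_iff, hcoeffg, MvPolynomial.notMem_support_iff.1 hcon.1,
      MvPolynomial.notMem_support_iff.1 hcon.2, mul_zero, add_zero] at ha
    exact ha rfl
  obtain ⟨a₀, ha₀, ha₀eq⟩ := hwit
  ext e
  rw [MvPolynomial.coeff_add, coeff_initForm, MvPolynomial.coeff_C_mul, coeff_initForm,
    coeff_initForm]
  have hcondg : (∀ a ∈ (C c * G + g').support, wdot w a ≤ wdot w e) ↔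
      wdot w b ≤ wdot w e := by
    constructor
    · intro h; exact h b hbin
    · intro h a ha
      rcases hsupp a ha with h1 | h1
      · exact le_trans (hGmax a h1) h
      · exact le_trans (hle a h1) h
  have hcondG : (∀ a ∈ G.support, wdot w a ≤ wdot w e) ↔ wdot w b ≤ wdot w e := by
    constructor
    · intro h; exact h b (MvPolynomial.mem_support_iff.2 hGb)
    · intro h a ha; exact le_trans (hGmax a ha) h
  have hcondg' : (∀ a ∈ g'.support, wdot w a ≤ wdot w e) ↔ wdot w b ≤ wdot w e := by
    constructor
    · intro h; rw [← ha₀eq]; exact h a₀ ha₀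
    · intro h a ha; exact le_trans (hle a ha) h
  rw [if_congr hcondg rfl rfl, if_congr hcondG rfl rfl, if_congr hcondg' rfl rfl]
  by_cases hcond : wdot w b ≤ wdot w e
  · rw [if_pos hcond, if_pos hcond, if_pos hcond, hcoeffg]
  · rw [if_neg hcond, if_neg hcond, if_neg hcond, mul_zero, add_zero]

/-- Combination lemma, case where `g'` has strictly bigger top weight. -/
lemma initForm_comb_gt (w : Fin n → ℝ) {G g' : MvPolynomial (Fin n) k} {b : Fin n →₀ ℕ}
    {c : k} (hGmax : ∀ a ∈ G.support, wdot w a ≤ wdot w b)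
    {astar : Fin n →₀ ℕ} (hastar : astar ∈ g'.support)
    (hamax : ∀ a ∈ g'.support, wdot w a ≤ wdot w astar)
    (hgt : wdot w b < wdot w astar) :
    initForm w (C c * G + g') = initForm w g' := by
  classical
  have hcoeffg : ∀ e, coeff e (C c * G + g') = c * coeff e G + coeff e g' := by
    intro e; rw [MvPolynomial.coeff_add, MvPolynomial.coeff_C_mul]
  have hsupp : ∀ a ∈ (C c * G + g').support, a ∈ G.support ∨ a ∈ g'.support := by
    intro a ha
    by_contra hcon
    push_neg at hcon
    rw [MvPolynomial.mem_support_iff, hcoeffg, MvPolynomial.notMem_support_iff.1 hcon.1,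
      MvPolynomial.notMem_support_iff.1 hcon.2, mul_zero, add_zero] at ha
    exact ha rfl
  have hasG : coeff astar G = 0 := by
    by_contra h0
    exact absurd (lt_of_lt_of_le hgt (hGmax astar (MvPolynomial.mem_support_iff.2 h0)))
      (not_lt.2 (le_refl _))
  have hasin : astar ∈ (C c * G + g').support := by
    rw [MvPolynomial.mem_support_iff, hcoeffg, hasG, mul_zero, zero_add]
    exact MvPolynomial.mem_support_iff.1 hastar
  ext e
  rw [coeff_initForm, coeff_initForm]
  have hcondg : (∀ a ∈ (C c * G + g').support, wdot w a ≤ wdot w e) ↔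
      wdot w astar ≤ wdot w e := by
    constructor
    · intro h; exact h astar hasin
    · intro h a ha
      rcases hsupp a ha with h1 | h1
      · exact le_trans (le_of_lt (lt_of_le_of_lt (hGmax a h1) hgt)) h
      · exact le_trans (hamax a h1) h
  have hcondg' : (∀ a ∈ g'.support, wdot w a ≤ wdot w e) ↔ wdot w astar ≤ wdot w e := by
    constructor
    · intro h; exact h astar hastar
    · intro h a ha; exact le_trans (hamax a ha) h
  rw [if_congr hcondg rfl rfl, if_congr hcondg' rfl rfl]
  by_cases hcond : wdot w astar ≤ wdot w e
  · rw [if_pos hcond, if_pos hcond, hcoeffg]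
    have hGe : coeff e G = 0 := by
      by_contra h0
      exact absurd (lt_of_le_of_lt hcond (lt_of_le_of_lt (le_refl _)
        (lt_of_le_of_lt (hGmax e (MvPolynomial.mem_support_iff.2 h0)) hgt)))
        (lt_irrefl _)
    rw [hGe, mul_zero, zero_add]
  · rw [if_neg hcond, if_neg hcond]

end Comb

section Induct

variable {tle : (Fin n →₀ ℕ) → (Fin n →₀ ℕ) → Prop} {I : Ideal (MvPolynomial (Fin n) k)}

/-- Induction: if the initial forms of all reduced representatives lie in an
ideal `J`, then so do the initial forms of all elements of `I`. -/
lemma initForm_mem (hterm : IsTermOrder tle)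
    (gm : ∀ m : Fin n →₀ ℕ, monomial m (1:k) ∈ leadIdeal tle I → MvPolynomial (Fin n) k)
    (hgm : ∀ m hm, gm m hm ∈ I ∧ coeff m (gm m hm) = 1 ∧
      (∀ a ∈ (gm m hm).support, tle a m) ∧
      (∀ a ∈ (gm m hm).support, a ≠ m → monomial a (1:k) ∉ leadIdeal tle I))
    (w : Fin n → ℝ)
    (halign : ∀ m hm, ∀ a ∈ (gm m hm).support, wdot w a ≤ wdot w m)
    (J : Ideal (MvPolynomial (Fin n) k))
    (hJ : ∀ m hm, initForm w (gm m hm) ∈ J) :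
    ∀ g ∈ I, g ≠ 0 → initForm w g ∈ J := by
  classical
  haveI : IsLinearOrder _ tle := hterm.1
  set P : (Fin n →₀ ℕ) → Prop := fun b => ∀ g : MvPolynomial (Fin n) k, g ∈ I →
    coeff b g ≠ 0 → (∀ a ∈ g.support, tle a b) → initForm w g ∈ J with hPdef
  have step : ∀ x, (∀ y, (tle y x ∧ ¬ tle x y) → P y) → P x := by
    intro x IH g hgI hgx hgmax
    have hg0 : g ≠ 0 := fun h0 => hgx (by rw [h0, MvPolynomial.coeff_zero])
    have hxg : x ∈ g.support := MvPolynomial.mem_support_iff.2 hgx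
    have hm : monomial x (1:k) ∈ leadIdeal tle I := mon_lm_mem hterm hgI hg0 hxg hgmax
    obtain ⟨hGI, hGc, hGle, hGred⟩ := hgm x hm
    set G := gm x hm with hGdef
    set c := coeff x g with hcdef
    set g' := g - C c * G with hg'def
    have hc0 : c ≠ 0 := hgx
    have hdecomp : C c * G + g' = g := by rw [hg'def]; ring
    have hg'I : g' ∈ I := Ideal.sub_mem _ hgI (Ideal.mul_mem_left _ _ hGI)
    have hcoeffg' : ∀ e, coeff e g' = coeff e g - c * coeff e G := by
      intro e; rw [hg'def, MvPolynomial.coeff_sub, MvPolynomial.coeff_C_mul]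
    have hg'x : coeff x g' = 0 := by rw [hcoeffg', hGc, mul_one, sub_self]
    have hsuppg' : ∀ a ∈ g'.support, a ∈ g.support ∨ a ∈ G.support := by
      intro a ha
      by_contra hcon
      push_neg at hcon
      rw [MvPolynomial.mem_support_iff, hcoeffg',
        MvPolynomial.notMem_support_iff.1 hcon.1,
        MvPolynomial.notMem_support_iff.1 hcon.2, mul_zero, sub_zero] at ha
      exact ha rfl
    have hg'max : ∀ a ∈ g'.support, tle a x := by
      intro a ha
      rcases hsuppg' a ha with h1 | h1
      · exact hgmax a h1
      · exact hGle a h1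
    have hGmaxw : ∀ a ∈ G.support, wdot w a ≤ wdot w x := halign x hm
    have hGx : coeff x G ≠ 0 := by rw [hGc]; exact one_ne_zero
    have hginJ : initForm w G ∈ J := hJ x hm
    by_cases hg'0 : g' = 0
    · have : g = C c * G := by rw [← hdecomp, hg'0, add_zero]
      rw [this, initForm_C_mul hc0]
      exact Ideal.mul_mem_left _ _ hginJ
    · -- compare top weights
      obtain ⟨astar, hastar, hamax⟩ := g'.support.exists_max_image (wdot w)
        (MvPolynomial.support_nonempty.2 hg'0)
      have hIH : initForm w g' ∈ J := by
        obtain ⟨b', hb', hb'max⟩ := hterm.exists_max _ (MvPolynomial.support_nonempty.2 hg'0)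
        have hb'ne : b' ≠ x := by
          intro hcon
          subst hcon
          exact MvPolynomial.mem_support_iff.1 hb' hg'x
        have hb'x : tle b' x := hg'max b' hb'
        exact IH b' (hterm.tlt_of_ne hb'x hb'ne) g' hg'I
          (MvPolynomial.mem_support_iff.1 hb') hb'max
      rcases lt_trichotomy (wdot w astar) (wdot w x) with hlt | heq | hgt
      · have hltall : ∀ a ∈ g'.support, wdot w a < wdot w x :=
          fun a ha => lt_of_le_of_lt (hamax a ha) hlt
        rw [← hdecomp, initForm_comb_lt w hc0 hGx hGmaxw hltall]
        exact Ideal.mul_mem_left _ _ hginJ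
      · have hleall : ∀ a ∈ g'.support, wdot w a ≤ wdot w x :=
          fun a ha => le_trans (hamax a ha) (le_of_eq heq)
        have hbin : x ∈ (C c * G + g').support := by
          rw [hdecomp]; exact hxg
        rw [← hdecomp, initForm_comb_eq w hbin hGx hGmaxw hleall ⟨astar, hastar, heq⟩]
        exact Ideal.add_mem _ (Ideal.mul_mem_left _ _ hginJ) hIH
      · rw [← hdecomp, initForm_comb_gt w hGmaxw hastar hamax hgt]
        exact hIH
  have main : ∀ b, P b := fun b => (IsTermOrder.wf hterm).induction (C := P) b step
  intro g hgI hg0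
  obtain ⟨b, hb, hbmax⟩ := hterm.exists_max _ (MvPolynomial.support_nonempty.2 hg0)
  exact main b g hgI (MvPolynomial.mem_support_iff.1 hb) hbmax

lemma initIdeal_le (hterm : IsTermOrder tle)
    (gm : ∀ m : Fin n →₀ ℕ, monomial m (1:k) ∈ leadIdeal tle I → MvPolynomial (Fin n) k)
    (hgm : ∀ m hm, gm m hm ∈ I ∧ coeff m (gm m hm) = 1 ∧
      (∀ a ∈ (gm m hm).support, tle a m) ∧
      (∀ a ∈ (gm m hm).support, a ≠ m → monomial a (1:k) ∉ leadIdeal tle I))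
    (w : Fin n → ℝ)
    (halign : ∀ m hm, ∀ a ∈ (gm m hm).support, wdot w a ≤ wdot w m)
    (J : Ideal (MvPolynomial (Fin n) k))
    (hJ : ∀ m hm, initForm w (gm m hm) ∈ J) :
    initIdeal w I ≤ J := by
  rw [initIdeal]
  refine Ideal.span_le.2 ?_
  rintro p ⟨f, hfI, hf0, rfl⟩
  exact initForm_mem hterm gm hgm w halign J hJ f hfI hf0

end Induct

section Lift

variable {N : ℕ} {I : Ideal (MvPolynomial (Fin n) k)}

lemma rdot_le_muM (M : Fin N → Fin n → ℤ) (f : MvPolynomial (Fin n) k)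
    {a : Fin n →₀ ℕ} (ha : a ∈ f.support) (i : Fin N) :
    rdotZ (M i) a ≤ muM M f i := by
  classical
  have hmem : rdotZ (M i) a ∈ f.support.image (fun a => rdotZ (M i) a) :=
    Finset.mem_image_of_mem _ ha
  have hle := Finset.le_max hmem
  rw [muM]
  cases hmax : (f.support.image fun a => rdotZ (M i) a).max with
  | bot => rw [hmax] at hle; exact absurd hle (by simp)
  | coe v =>
    rw [hmax] at hle
    rw [WithBot.unbotD_coe]
    exact WithBot.coe_le_coe.1 hle

lemma muM_eq (M : Fin N → Fin n → ℤ) (f : MvPolynomial (Fin n) k) (i : Fin N)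
    {m : Fin n →₀ ℕ} (hm : m ∈ f.support)
    (hmax : ∀ a ∈ f.support, rdotZ (M i) a ≤ rdotZ (M i) m) :
    muM M f i = rdotZ (M i) m := by
  classical
  refine le_antisymm ?_ (rdot_le_muM M f hm i)
  rw [muM]
  cases hmaxv : (f.support.image fun a => rdotZ (M i) a).max with
  | bot =>
    exfalso
    rw [Finset.max_eq_bot] at hmaxv
    have : rdotZ (M i) m ∈ f.support.image (fun a => rdotZ (M i) a) :=
      Finset.mem_image_of_mem _ hm
    rw [hmaxv] at this
    exact absurd this (Finset.notMem_empty _)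
  | coe v =>
    rw [WithBot.unbotD_coe]
    have hv := Finset.mem_of_max hmaxv
    obtain ⟨a, ha, hva⟩ := Finset.mem_image.1 hv
    rw [← hva]
    exact hmax a ha

lemma liftExp_eq (M : Fin N → Fin n → ℤ) (f : MvPolynomial (Fin n) k) (a : Fin n →₀ ℕ) :
    liftExp M f a = Finsupp.mapDomain Sum.inl a +
      Finsupp.mapDomain Sum.inr
        (Finsupp.equivFunOnFinite.symm (fun i => (muM M f i - rdotZ (M i) a).toNat)) := by
  ext s
  rw [Finsupp.add_apply]
  cases s with
  | inl j =>
    rw [Finsupp.mapDomain_apply Sum.inl_injective,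
      Finsupp.mapDomain_notin_range _ _ (by simp), add_zero]
    simp [liftExp]
  | inr i =>
    rw [Finsupp.mapDomain_notin_range _ _ (by simp),
      Finsupp.mapDomain_apply Sum.inr_injective, zero_add]
    simp [liftExp]

/-- The `ℤ^N`-grading weight of an exponent in the lifted polynomial ring. -/
def Wt (M : Fin N → Fin n → ℤ) (e : (Fin n ⊕ Fin N) →₀ ℕ) : Fin N → ℤ :=
  fun i => (∑ j, M i j * (e (Sum.inl j) : ℤ)) + (e (Sum.inr i) : ℤ)

lemma Wt_add (M : Fin N → Fin n → ℤ) (e e' : (Fin n ⊕ Fin N) →₀ ℕ) :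
    Wt M (e + e') = Wt M e + Wt M e' := by
  funext i
  simp only [Wt, Finsupp.add_apply, Pi.add_apply]
  push_cast
  simp only [mul_add, Finset.sum_add_distrib]
  ring

lemma Wt_mapDomain_inl (M : Fin N → Fin n → ℤ) (a : Fin n →₀ ℕ) :
    Wt M (Finsupp.mapDomain Sum.inl a) = fun i => rdotZ (M i) a := by
  funext i
  have h1 : (Finsupp.mapDomain Sum.inl a : (Fin n ⊕ Fin N) →₀ ℕ) (Sum.inr i) = 0 :=
    Finsupp.mapDomain_notin_range _ _ (by simp)
  have h2 : ∀ j : Fin n, (Finsupp.mapDomain Sum.inl a : (Fin n ⊕ Fin N) →₀ ℕ)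
      (Sum.inl j) = a j := fun j => Finsupp.mapDomain_apply Sum.inl_injective a j
  rw [Wt, rdotZ, h1]
  simp [h2]

lemma Wt_mapDomain_inr (M : Fin N → Fin n → ℤ) (u : Fin N →₀ ℕ) :
    Wt M (Finsupp.mapDomain Sum.inr u) = fun i => (u i : ℤ) := by
  funext i
  have h1 : ∀ j : Fin n, (Finsupp.mapDomain Sum.inr u : (Fin n ⊕ Fin N) →₀ ℕ)
      (Sum.inl j) = 0 := fun j => Finsupp.mapDomain_notin_range _ _ (by simp)
  have h2 : (Finsupp.mapDomain Sum.inr u : (Fin n ⊕ Fin N) →₀ ℕ) (Sum.inr i) = u i :=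
    Finsupp.mapDomain_apply Sum.inr_injective u i
  rw [Wt, h2]
  simp [h1]

lemma Wt_liftExp (M : Fin N → Fin n → ℤ) (f : MvPolynomial (Fin n) k)
    {a : Fin n →₀ ℕ} (ha : a ∈ f.support) :
    Wt M (liftExp M f a) = fun i => muM M f i := by
  rw [liftExp_eq, Wt_add, Wt_mapDomain_inl, Wt_mapDomain_inr]
  funext i
  simp only [Pi.add_apply]
  have : ((Finsupp.equivFunOnFinite.symm
      (fun i => (muM M f i - rdotZ (M i) a).toNat)) i : ℤ) =
      muM M f i - rdotZ (M i) a := by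
    simp only [Finsupp.coe_equivFunOnFinite_symm]
    exact Int.toNat_of_nonneg (by
      have := rdot_le_muM M f ha i
      omega)
  rw [this]
  ring

/-- Graded component extraction in the lifted ring. -/
def wcomp (M : Fin N → Fin n → ℤ) (d : Fin N → ℤ)
    (p : MvPolynomial (Fin n ⊕ Fin N) k) : MvPolynomial (Fin n ⊕ Fin N) k :=
  ∑ e ∈ p.support.filter (fun e => Wt M e = d), monomial e (coeff e p)

lemma coeff_wcomp (M : Fin N → Fin n → ℤ) (d : Fin N → ℤ)
    (p : MvPolynomial (Fin n ⊕ Fin N) k) (e : (Fin n ⊕ Fin N) →₀ ℕ) :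
    coeff e (wcomp M d p) = if Wt M e = d then coeff e p else 0 := by
  rw [wcomp]
  exact coeff_filterSum p (fun e => Wt M e = d) e

lemma wcomp_zero (M : Fin N → Fin n → ℤ) (d : Fin N → ℤ) :
    wcomp M d (0 : MvPolynomial (Fin n ⊕ Fin N) k) = 0 := by
  ext e
  rw [coeff_wcomp, MvPolynomial.coeff_zero]
  split_ifs <;> rfl

lemma wcomp_add (M : Fin N → Fin n → ℤ) (d : Fin N → ℤ)
    (p q : MvPolynomial (Fin n ⊕ Fin N) k) :
    wcomp M d (p + q) = wcomp M d p + wcomp M d q := by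
  ext e
  rw [MvPolynomial.coeff_add, coeff_wcomp, coeff_wcomp, coeff_wcomp,
    MvPolynomial.coeff_add]
  split_ifs <;> simp

lemma wcomp_sum (M : Fin N → Fin n → ℤ) (d : Fin N → ℤ) {ι : Type*} (s : Finset ι)
    (F : ι → MvPolynomial (Fin n ⊕ Fin N) k) :
    wcomp M d (∑ x ∈ s, F x) = ∑ x ∈ s, wcomp M d (F x) := by
  classical
  induction s using Finset.cons_induction with
  | empty => simp [wcomp_zero]
  | cons a s ha ih => rw [Finset.sum_cons, Finset.sum_cons, wcomp_add, ih]

lemma wcomp_monomial_mul (M : Fin N → Fin n → ℤ) (d : Fin N → ℤ)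
    (s : (Fin n ⊕ Fin N) →₀ ℕ) (c : k) (p : MvPolynomial (Fin n ⊕ Fin N) k) :
    wcomp M d (monomial s c * p) = monomial s c * wcomp M (d - Wt M s) p := by
  ext e
  rw [coeff_wcomp, MvPolynomial.coeff_monomial_mul', MvPolynomial.coeff_monomial_mul',
    coeff_wcomp]
  by_cases hse : s ≤ e
  · rw [if_pos hse, if_pos hse]
    have hW : Wt M (e - s) = Wt M e - Wt M s := by
      rw [eq_sub_iff_add_eq, ← Wt_add, tsub_add_cancel_of_le hse]
    by_cases hcond : Wt M e = d
    · rw [if_pos hcond, if_pos (by rw [hW, hcond])]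
    · rw [if_neg hcond, if_neg (fun hcon => hcond (by
        rw [hW] at hcon
        exact sub_left_inj.1 hcon)), mul_zero]
  · rw [if_neg hse, if_neg hse]
    split_ifs <;> rfl

lemma wcomp_of_homog (M : Fin N → Fin n → ℤ) (d d₀ : Fin N → ℤ)
    (p : MvPolynomial (Fin n ⊕ Fin N) k) (hp : ∀ e ∈ p.support, Wt M e = d₀) :
    wcomp M d p = if d = d₀ then p else 0 := by
  split_ifs with hd
  · subst hd
    ext e
    rw [coeff_wcomp]
    by_cases he : e ∈ p.support
    · rw [if_pos (hp e he)]
    · rw [MvPolynomial.notMem_support_iff.1 he]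
      split_ifs <;> rfl
  · ext e
    rw [coeff_wcomp, MvPolynomial.coeff_zero]
    by_cases he : e ∈ p.support
    · rw [if_neg (fun hcon => hd (hcon.symm.trans (hp e he)))]
    · rw [MvPolynomial.notMem_support_iff.1 he]
      split_ifs <;> rfl

lemma liftPoly_support (M : Fin N → Fin n → ℤ) (f : MvPolynomial (Fin n) k)
    {e : (Fin n ⊕ Fin N) →₀ ℕ} (he : e ∈ (liftPoly M f).support) :
    ∃ a ∈ f.support, e = liftExp M f a := by
  classical
  rw [liftPoly] at he
  have := MvPolynomial.support_sum he
  rw [Finset.mem_biUnion] at this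
  obtain ⟨a, ha, hae⟩ := this
  have := MvPolynomial.support_monomial_subset hae
  rw [Finset.mem_singleton] at this
  exact ⟨a, ha, this⟩

lemma Wt_liftPoly (M : Fin N → Fin n → ℤ) (f : MvPolynomial (Fin n) k) :
    ∀ e ∈ (liftPoly M f).support, Wt M e = fun i => muM M f i := by
  intro e he
  obtain ⟨a, ha, rfl⟩ := liftPoly_support M f he
  exact Wt_liftExp M f ha

lemma wcomp_mem_liftIdeal (M : Fin N → Fin n → ℤ) (d : Fin N → ℤ)
    {q : MvPolynomial (Fin n ⊕ Fin N) k} (hq : q ∈ liftIdeal M I) :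
    wcomp M d q ∈ liftIdeal M I := by
  classical
  have hq' : q ∈ Submodule.span (MvPolynomial (Fin n ⊕ Fin N) k)
      {g | ∃ f ∈ I, g = liftPoly M f} := hq
  obtain ⟨cc, hcsub, rfl⟩ := Submodule.mem_span_set.1 hq'
  rw [Finsupp.sum, wcomp_sum]
  refine Ideal.sum_mem _ (fun g hg => ?_)
  obtain ⟨f, hfI, rfl⟩ := hcsub hg
  have hmem : liftPoly M f ∈ liftIdeal M I := Ideal.subset_span ⟨f, hfI, rfl⟩
  rw [smul_eq_mul]
  have hexp : cc (liftPoly M f) * liftPoly M f =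
      ∑ s ∈ (cc (liftPoly M f)).support,
        monomial s (coeff s (cc (liftPoly M f))) * liftPoly M f := by
    rw [← Finset.sum_mul, MvPolynomial.support_sum_monomial_coeff]
  rw [hexp, wcomp_sum]
  refine Ideal.sum_mem _ (fun s _ => ?_)
  rw [wcomp_monomial_mul, wcomp_of_homog M _ _ _ (Wt_liftPoly M f)]
  split_ifs
  · exact Ideal.mul_mem_left _ _ hmem
  · rw [mul_zero]; exact Ideal.zero_mem _

lemma aeval_elim_monomial (v : Fin N → k) (a : Fin n →₀ ℕ) (u : Fin N →₀ ℕ) (c : k) :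
    aeval (Sum.elim X (fun i => C (v i)) : Fin n ⊕ Fin N → MvPolynomial (Fin n) k)
      (monomial (Finsupp.mapDomain Sum.inl a + Finsupp.mapDomain Sum.inr u) c) =
      monomial a (c * ∏ i, v i ^ u i) := by
  classical
  rw [MvPolynomial.aeval_monomial]
  rw [Finsupp.prod_fintype _ _ (fun s => pow_zero _)]
  rw [Fintype.prod_sum_type]
  have hinl : ∀ j : Fin n, ((Finsupp.mapDomain Sum.inl a + Finsupp.mapDomain Sum.inr u :
      (Fin n ⊕ Fin N) →₀ ℕ)) (Sum.inl j) = a j := by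
    intro j
    rw [Finsupp.add_apply, Finsupp.mapDomain_apply Sum.inl_injective,
      Finsupp.mapDomain_notin_range _ _ (by simp), add_zero]
  have hinr : ∀ i : Fin N, ((Finsupp.mapDomain Sum.inl a + Finsupp.mapDomain Sum.inr u :
      (Fin n ⊕ Fin N) →₀ ℕ)) (Sum.inr i) = u i := by
    intro i
    rw [Finsupp.add_apply, Finsupp.mapDomain_apply Sum.inr_injective,
      Finsupp.mapDomain_notin_range _ _ (by simp), zero_add]
  simp only [Sum.elim_inl, Sum.elim_inr, hinl, hinr]
  have h1 : (∏ j, (X j : MvPolynomial (Fin n) k) ^ a j) = monomial a 1 := by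
    rw [MvPolynomial.monomial_eq, map_one, one_mul,
      Finsupp.prod_fintype _ _ (fun j => pow_zero _)]
  have h2 : (∏ i, (C (v i) : MvPolynomial (Fin n) k) ^ u i) = C (∏ i, v i ^ u i) := by
    simp only [← map_pow, ← map_prod]
  rw [h1, h2, MvPolynomial.algebraMap_eq,
    mul_comm (monomial a (1:k)) (C (∏ i, v i ^ u i)), ← mul_assoc, ← map_mul,
    C_mul_monomial, mul_one]

lemma aeval_elim_liftPoly (v : Fin N → k) (M : Fin N → Fin n → ℤ)
    (f : MvPolynomial (Fin n) k) :
    aeval (Sum.elim X (fun i => C (v i)) : Fin n ⊕ Fin N → MvPolynomial (Fin n) k)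
      (liftPoly M f) =
    ∑ a ∈ f.support,
      monomial a (coeff a f * ∏ i, v i ^ ((muM M f i - rdotZ (M i) a).toNat)) := by
  rw [liftPoly, map_sum]
  refine Finset.sum_congr rfl (fun a _ => ?_)
  rw [liftExp_eq, aeval_elim_monomial]
  simp [Finsupp.coe_equivFunOnFinite_symm]

lemma aeval_one_liftPoly (M : Fin N → Fin n → ℤ) (f : MvPolynomial (Fin n) k) :
    aeval (Sum.elim X (fun _ => C (1:k)) : Fin n ⊕ Fin N → MvPolynomial (Fin n) k)
      (liftPoly M f) = f := by
  rw [aeval_elim_liftPoly]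
  simp only [one_pow, Finset.prod_const_one, mul_one]
  exact MvPolynomial.support_sum_monomial_coeff f

end Lift

section Eval

variable {N : ℕ} {I : Ideal (MvPolynomial (Fin n) k)}
variable {tle : (Fin n →₀ ℕ) → (Fin n →₀ ℕ) → Prop}

/-- An element of `I` supported on standard monomials is zero. -/
lemma std_vanish (hterm : IsTermOrder tle) {h : MvPolynomial (Fin n) k} (hI : h ∈ I)
    (hstd : ∀ e ∈ h.support, monomial e (1:k) ∉ leadIdeal tle I) : h = 0 := by
  by_contra h0
  obtain ⟨b, hb, hbmax⟩ := hterm.exists_max _ (MvPolynomial.support_nonempty.2 h0)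
  exact hstd b hb (mon_lm_mem hterm hI h0 hb hbmax)

lemma psi_monomial (u : Fin N →₀ ℕ) (c : k) :
    aeval (fun i => (X (Sum.inr i) : MvPolynomial (Fin n ⊕ Fin N) k)) (monomial u c) =
      monomial (Finsupp.mapDomain Sum.inr u) c := by
  rw [MvPolynomial.aeval_monomial, Finsupp.prod_fintype _ _ (fun i => pow_zero _),
    MvPolynomial.monomial_eq, Finsupp.prod_mapDomain_index_inj Sum.inr_injective,
    Finsupp.prod_fintype _ _ (fun i => pow_zero _), MvPolynomial.algebraMap_eq]

lemma evv_mon_inl (v : Fin N → k) (a : Fin n →₀ ℕ) (c : k) :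
    aeval (Sum.elim X (fun i => C (v i)) : Fin n ⊕ Fin N → MvPolynomial (Fin n) k)
      (monomial (Finsupp.mapDomain Sum.inl a) c) = monomial a c := by
  have h := aeval_elim_monomial v a 0 c
  rw [Finsupp.mapDomain_zero, add_zero] at h
  rw [h]
  simp

lemma wcomp_monomial (M : Fin N → Fin n → ℤ) (d : Fin N → ℤ)
    (s : (Fin n ⊕ Fin N) →₀ ℕ) (c : k) :
    wcomp M d (monomial s c) = if Wt M s = d then monomial s c else 0 := by
  ext e
  rw [coeff_wcomp]
  by_cases hse : s = e
  · subst hse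
    by_cases hc : Wt M s = d
    · rw [if_pos hc, if_pos hc]
    · rw [if_neg hc, if_neg hc, MvPolynomial.coeff_zero]
  · have h0 : coeff e (monomial s c) = 0 := by
      rw [MvPolynomial.coeff_monomial, if_neg hse]
    rw [h0]
    split_ifs <;> simp [MvPolynomial.coeff_monomial, hse]

lemma ev1_psi_wcomp (M : Fin N → Fin n → ℤ) (d' : Fin N → ℤ)
    (p : MvPolynomial (Fin N) k) :
    aeval (Sum.elim X (fun _ => C (1:k)) : Fin n ⊕ Fin N → MvPolynomial (Fin n) k)
      (wcomp M d' (aeval (fun i => (X (Sum.inr i) : MvPolynomial (Fin n ⊕ Fin N) k)) p)) =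
    C (∑ u ∈ p.support.filter (fun u => ∀ i, (u i : ℤ) = d' i), coeff u p) := by
  classical
  have hψ : aeval (fun i => (X (Sum.inr i) : MvPolynomial (Fin n ⊕ Fin N) k)) p =
      ∑ u ∈ p.support, monomial (Finsupp.mapDomain Sum.inr u) (coeff u p) := by
    conv_lhs => rw [← MvPolynomial.support_sum_monomial_coeff p]
    rw [map_sum]
    exact Finset.sum_congr rfl (fun u _ => psi_monomial u (coeff u p))
  rw [hψ, wcomp_sum, map_sum, map_sum, Finset.sum_filter]
  refine Finset.sum_congr rfl (fun u _ => ?_)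
  rw [wcomp_monomial]
  have hWt : Wt M (Finsupp.mapDomain Sum.inr u) = fun i => (u i : ℤ) :=
    Wt_mapDomain_inr M u
  by_cases hcond : ∀ i, (u i : ℤ) = d' i
  · rw [if_pos (by rw [hWt]; exact funext hcond), if_pos hcond]
    have h := aeval_elim_monomial (n := n) (fun _ => (1:k)) 0 u (coeff u p)
    rw [Finsupp.mapDomain_zero, zero_add] at h
    rw [h]
    simp [MvPolynomial.monomial_zero']
  · rw [if_neg (fun hcon => hcond (by rw [hWt] at hcon; exact fun i => congrFun hcon i)),
      if_neg hcond, map_zero]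

lemma ev1_liftIdeal_le (M : Fin N → Fin n → ℤ) {x : MvPolynomial (Fin n ⊕ Fin N) k}
    (hx : x ∈ liftIdeal M I) :
    aeval (Sum.elim X (fun _ => C (1:k)) : Fin n ⊕ Fin N → MvPolynomial (Fin n) k) x ∈ I := by
  have hle : Ideal.map (aeval (Sum.elim X (fun _ => C (1:k)) :
      Fin n ⊕ Fin N → MvPolynomial (Fin n) k) : MvPolynomial (Fin n ⊕ Fin N) k →ₐ[k] _).toRingHom
      (liftIdeal M I) ≤ I := by
    rw [liftIdeal, Ideal.map_span]
    refine Ideal.span_le.2 ?_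
    rintro y ⟨x', ⟨f, hfI, rfl⟩, rfl⟩
    show aeval (Sum.elim X (fun _ => C (1:k))) (liftPoly M f) ∈ I
    rw [aeval_one_liftPoly]
    exact hfI
  exact hle (Ideal.mem_map_of_mem _ hx)


lemma key_injective (hterm : IsTermOrder tle) (M : Fin N → Fin n → ℤ)
    (l : (Fin n →₀ ℕ) →₀ MvPolynomial (Fin N) k)
    (hstd : ∀ a ∈ l.support, monomial a (1:k) ∉ leadIdeal tle I)
    (hq : (∑ a ∈ l.support,
      (aeval (fun i => (X (Sum.inr i) : MvPolynomial (Fin n ⊕ Fin N) k)) (l a)) *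
        monomial (Finsupp.mapDomain Sum.inl a) (1:k)) ∈ liftIdeal M I) :
    l = 0 := by
  classical
  by_contra hl0
  obtain ⟨a, ha⟩ := Finsupp.support_nonempty_iff.2 hl0
  have hla : l a ≠ 0 := Finsupp.mem_support_iff.1 ha
  obtain ⟨u₀, hu₀⟩ := MvPolynomial.ne_zero_iff.1 hla
  set d : Fin N → ℤ := fun i => rdotZ (M i) a + (u₀ i : ℤ) with hd
  set κ : (Fin n →₀ ℕ) → k := fun a' => ∑ u ∈ (l a').support.filter
      (fun u => ∀ i, (u i : ℤ) = (d - Wt M (Finsupp.mapDomain Sum.inl a')) i),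
      coeff u (l a') with hκ
  have hwq := wcomp_mem_liftIdeal (I := I) M d hq
  have hhI := ev1_liftIdeal_le (I := I) M hwq
  have hcomp : aeval (Sum.elim X (fun _ => C (1:k)) :
      Fin n ⊕ Fin N → MvPolynomial (Fin n) k)
      (wcomp M d (∑ a' ∈ l.support,
        (aeval (fun i => (X (Sum.inr i) : MvPolynomial (Fin n ⊕ Fin N) k)) (l a')) *
          monomial (Finsupp.mapDomain Sum.inl a') (1:k))) =
      ∑ a' ∈ l.support, monomial a' (κ a') := by
    rw [wcomp_sum, map_sum]
    refine Finset.sum_congr rfl (fun a' _ => ?_)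
    rw [mul_comm ((aeval (fun i => (X (Sum.inr i) : MvPolynomial (Fin n ⊕ Fin N) k)))
      (l a')) _, wcomp_monomial_mul, map_mul, evv_mon_inl, ev1_psi_wcomp,
      mul_comm (monomial a' (1:k)) _, C_mul_monomial, mul_one]
  rw [hcomp] at hhI
  have hsupp : ∀ e ∈ (∑ a' ∈ l.support, monomial a' (κ a')).support, e ∈ l.support := by
    intro e he
    have h1 := MvPolynomial.support_sum he
    rw [Finset.mem_biUnion] at h1
    obtain ⟨a', ha', hae⟩ := h1
    have := MvPolynomial.support_monomial_subset hae
    rw [Finset.mem_singleton] at this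
    rwa [this]
  have hzero : (∑ a' ∈ l.support, monomial a' (κ a')) = 0 :=
    std_vanish hterm hhI (fun e he => hstd e (hsupp e he))
  have hcoeffa : coeff a (∑ a' ∈ l.support, monomial a' (κ a')) = κ a := by
    rw [MvPolynomial.coeff_sum]
    simp only [MvPolynomial.coeff_monomial]
    rw [Finset.sum_ite_eq' l.support a κ, if_pos ha]
  rw [hzero, MvPolynomial.coeff_zero] at hcoeffa
  have hdi : ∀ i, (d - Wt M (Finsupp.mapDomain Sum.inl a)) i = (u₀ i : ℤ) := by
    intro i
    rw [Pi.sub_apply, Wt_mapDomain_inl, hd]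
    ring
  have hκa : κ a = coeff u₀ (l a) := by
    rw [hκ]
    simp only []
    rw [Finset.sum_filter]
    have hiff : ∀ u ∈ (l a).support,
        ((∀ i, (u i : ℤ) = (d - Wt M (Finsupp.mapDomain Sum.inl a)) i) ↔ u = u₀) := by
      intro u _
      constructor
      · intro h
        ext i
        have h2 := h i
        rw [hdi i] at h2
        exact_mod_cast h2
      · rintro rfl i
        rw [hdi i]
    rw [Finset.sum_congr rfl (fun u hu => if_congr (hiff u hu) rfl rfl),
      Finset.sum_ite_eq' (l a).support u₀ (fun u => coeff u (l a)),
      if_pos (MvPolynomial.mem_support_iff.2 hu₀)]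
  rw [hκa] at hcoeffa
  exact hu₀ hcoeffa.symm

lemma prodv_eq (M : Fin N → Fin n → ℤ) (c : Fin N → ℝ) (f : MvPolynomial (Fin n) k)
    {a : Fin n →₀ ℕ} (ha : a ∈ f.support) :
    (∏ i, (if c i = 0 then (1:k) else 0) ^ (muM M f i - rdotZ (M i) a).toNat) =
      if (∀ i, c i ≠ 0 → rdotZ (M i) a = muM M f i) then 1 else 0 := by
  classical
  by_cases hca : ∀ i, c i ≠ 0 → rdotZ (M i) a = muM M f i
  · rw [if_pos hca]
    refine Finset.prod_eq_one (fun i _ => ?_)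
    by_cases hci : c i = 0
    · rw [if_pos hci, one_pow]
    · rw [hca i hci, sub_self, Int.toNat_zero, pow_zero]
  · rw [if_neg hca]
    push_neg at hca
    obtain ⟨i, hci, hne⟩ := hca
    refine Finset.prod_eq_zero (Finset.mem_univ i) ?_
    rw [if_neg hci]
    have hlt : 0 < muM M f i - rdotZ (M i) a := by
      have := rdot_le_muM M f ha i
      omega
    rw [zero_pow (by omega : (muM M f i - rdotZ (M i) a).toNat ≠ 0)]

lemma eval_liftPoly_unaligned (M : Fin N → Fin n → ℤ) (c : Fin N → ℝ)
    (f : MvPolynomial (Fin n) k)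
    (hnal : ∀ a ∈ f.support, ∃ i, c i ≠ 0 ∧ rdotZ (M i) a ≠ muM M f i) :
    aeval (Sum.elim X (fun i => C (if c i = 0 then (1:k) else 0)) :
      Fin n ⊕ Fin N → MvPolynomial (Fin n) k) (liftPoly M f) = 0 := by
  rw [aeval_elim_liftPoly]
  refine Finset.sum_eq_zero (fun a ha => ?_)
  rw [prodv_eq M c f ha, if_neg (fun hcon => ?_), mul_zero, MvPolynomial.monomial_zero]
  obtain ⟨i, hci, hne⟩ := hnal a ha
  exact hne (hcon i hci)

lemma eval_liftPoly_aligned (M : Fin N → Fin n → ℤ) (c : Fin N → ℝ)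
    (f : MvPolynomial (Fin n) k) {a₀ : Fin n →₀ ℕ} (ha₀ : a₀ ∈ f.support)
    (hal : ∀ i, c i ≠ 0 → rdotZ (M i) a₀ = muM M f i) :
    aeval (Sum.elim X (fun i => C (if c i = 0 then (1:k) else 0)) :
      Fin n ⊕ Fin N → MvPolynomial (Fin n) k) (liftPoly M f) =
    initForm (∑ i ∈ Finset.univ.filter (fun i => c i ≠ 0), (fun j => (M i j : ℝ))) f := by
  classical
  set P : Finset (Fin N) := Finset.univ.filter (fun i => c i ≠ 0) with hP
  set wP : Fin n → ℝ := ∑ i ∈ P, (fun j => (M i j : ℝ)) with hwP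
  set F : (Fin n →₀ ℕ) → ℤ := fun a => ∑ i ∈ P, rdotZ (M i) a with hF
  set B : ℤ := ∑ i ∈ P, muM M f i with hB
  have hFwdot : ∀ a, wdot wP a = (F a : ℝ) := by
    intro a
    rw [hwP, wdot_sum, hF]
    push_cast
    exact Finset.sum_congr rfl (fun i _ => wdot_cast (M i) a)
  have hFle : ∀ a ∈ f.support, F a ≤ B := by
    intro a ha
    exact Finset.sum_le_sum (fun i _ => rdot_le_muM M f ha i)
  have hcondF : ∀ a ∈ f.support,
      ((∀ i, c i ≠ 0 → rdotZ (M i) a = muM M f i) ↔ F a = B) := by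
    intro a ha
    constructor
    · intro h
      exact Finset.sum_congr rfl (fun i hi => h i (Finset.mem_filter.1 hi).2)
    · intro h i hci
      have := (Finset.sum_eq_sum_iff_of_le (fun i _ => rdot_le_muM M f ha i)).1 h
      exact this i (Finset.mem_filter.2 ⟨Finset.mem_univ i, hci⟩)
  have hFa₀ : F a₀ = B := (hcondF a₀ ha₀).1 hal
  have hcondmax : ∀ a ∈ f.support,
      ((∀ a' ∈ f.support, wdot wP a' ≤ wdot wP a) ↔ F a = B) := by
    intro a ha
    constructor
    · intro h
      refine le_antisymm (hFle a ha) ?_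
      have := h a₀ ha₀
      rw [hFwdot, hFwdot, Int.cast_le] at this
      rw [← hFa₀]
      exact this
    · intro h a' ha'
      rw [hFwdot, hFwdot, Int.cast_le, h]
      exact hFle a' ha'
  rw [aeval_elim_liftPoly, initForm]
  rw [Finset.sum_filter]
  refine Finset.sum_congr rfl (fun a ha => ?_)
  rw [prodv_eq M c f ha]
  by_cases hcond : ∀ a' ∈ f.support, wdot wP a' ≤ wdot wP a
  · rw [if_pos hcond, if_pos (((hcondF a ha).2 ((hcondmax a ha).1 hcond))), mul_one]
  · rw [if_neg hcond, if_neg (fun hcon => hcond ((hcondmax a ha).2 ((hcondF a ha).1 hcon))),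
      mul_zero, MvPolynomial.monomial_zero]

lemma ker_elim (v : Fin N → k) :
    RingHom.ker (aeval (Sum.elim X (fun i => C (v i)) :
      Fin n ⊕ Fin N → MvPolynomial (Fin n) k) :
      MvPolynomial (Fin n ⊕ Fin N) k →ₐ[k] MvPolynomial (Fin n) k) =
    Ideal.span (Set.range fun i =>
      (X (Sum.inr i) : MvPolynomial (Fin n ⊕ Fin N) k) - C (v i)) := by
  classical
  set ε := (aeval (Sum.elim X (fun i => C (v i)) :
    Fin n ⊕ Fin N → MvPolynomial (Fin n) k) :
    MvPolynomial (Fin n ⊕ Fin N) k →ₐ[k] MvPolynomial (Fin n) k) with hε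
  set ι := (aeval (fun j => (X (Sum.inl j) : MvPolynomial (Fin n ⊕ Fin N) k)) :
    MvPolynomial (Fin n) k →ₐ[k] MvPolynomial (Fin n ⊕ Fin N) k) with hι
  set K := Ideal.span (Set.range fun i =>
    (X (Sum.inr i) : MvPolynomial (Fin n ⊕ Fin N) k) - C (v i)) with hK
  have hdiff : ∀ p : MvPolynomial (Fin n ⊕ Fin N) k, p - ι (ε p) ∈ K := by
    intro p
    induction p using MvPolynomial.induction_on with
    | C a =>
      rw [MvPolynomial.aeval_C, MvPolynomial.algebraMap_eq, MvPolynomial.aeval_C,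
        MvPolynomial.algebraMap_eq, sub_self]
      exact Ideal.zero_mem _
    | add p q hp hq =>
      rw [map_add, map_add]
      have : p + q - (ι (ε p) + ι (ε q)) = (p - ι (ε p)) + (q - ι (ε q)) := by ring
      rw [this]
      exact Ideal.add_mem _ hp hq
    | mul_X p s hp =>
      rw [map_mul, map_mul]
      have hid : p * X s - ι (ε p) * ι (ε (X s)) =
          (p - ι (ε p)) * X s + ι (ε p) * (X s - ι (ε (X s))) := by ring
      rw [hid]
      refine Ideal.add_mem _ (Ideal.mul_mem_right _ _ hp) (Ideal.mul_mem_left _ _ ?_)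
      cases s with
      | inl j =>
        rw [hε, MvPolynomial.aeval_X, Sum.elim_inl, hι, MvPolynomial.aeval_X, sub_self]
        exact Ideal.zero_mem _
      | inr i =>
        rw [hε, MvPolynomial.aeval_X, Sum.elim_inr, hι, MvPolynomial.aeval_C,
          MvPolynomial.algebraMap_eq]
        exact Ideal.subset_span ⟨i, rfl⟩
  refine le_antisymm ?_ ?_
  · intro p hp
    rw [RingHom.mem_ker] at hp
    have h2 := hdiff p
    rw [show ε p = aeval (Sum.elim X (fun i => C (v i))) p from rfl] at hp
    rw [hp, map_zero, sub_zero] at h2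
    exact h2
  · rw [hK]
    refine Ideal.span_le.2 ?_
    rintro y ⟨i, rfl⟩
    rw [SetLike.mem_coe, RingHom.mem_ker]
    rw [show (ε : MvPolynomial (Fin n ⊕ Fin N) k → MvPolynomial (Fin n) k)
      ((X (Sum.inr i) : MvPolynomial (Fin n ⊕ Fin N) k) - C (v i)) =
      aeval (Sum.elim X (fun i => C (v i)))
        ((X (Sum.inr i) : MvPolynomial (Fin n ⊕ Fin N) k) - C (v i)) from rfl]
    rw [map_sub, MvPolynomial.aeval_X, Sum.elim_inr, MvPolynomial.aeval_C,
      MvPolynomial.algebraMap_eq, sub_self]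

lemma elim_surjective (v : Fin N → k) :
    Function.Surjective (aeval (Sum.elim X (fun i => C (v i)) :
      Fin n ⊕ Fin N → MvPolynomial (Fin n) k) :
      MvPolynomial (Fin n ⊕ Fin N) k →ₐ[k] MvPolynomial (Fin n) k) := by
  intro p
  refine ⟨rename Sum.inl p, ?_⟩
  rw [MvPolynomial.aeval_rename]
  have h : (Sum.elim X (fun i => C (v i)) ∘ Sum.inl) = (X : Fin n → MvPolynomial (Fin n) k) :=
    rfl
  rw [h]
  exact MvPolynomial.aeval_X_left_apply p

end Eval





end Aux

set_option synthInstance.maxHeartbeats 400000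

set_option maxHeartbeats 3200000 in
theorem lifted_family_is_free_with_standard_monomial_basis_and_fibers
    {k : Type*} [Field k] {n N : ℕ}
    (I : Ideal (MvPolynomial (Fin n) k))
    -- `I` is homogeneous:
    (hIhom : ∀ f ∈ I, ∀ j : ℕ, MvPolynomial.homogeneousComponent j f ∈ I)
    -- a term order `<`:
    (tle : (Fin n →₀ ℕ) → (Fin n →₀ ℕ) → Prop) (hterm : IsTermOrder tle)
    -- `C = gfCone I w₀` is a maximal Gröbner cone compatible with `<`:
    (w₀ : Fin n → ℝ) (hmono : initIdeal w₀ I = leadIdeal tle I)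
    -- the rows of `M` lie in `C` and together with the lineality space generate `C`:
    (M : Fin N → Fin n → ℤ)
    (hrows : ∀ i, (fun j => (M i j : ℝ)) ∈ gfCone I w₀)
    (hCgen : gfCone I w₀ = {x : Fin n → ℝ | ∃ l : Fin n → ℝ, initIdeal l I = I ∧
      ∃ c : Fin N → ℝ, (∀ i, 0 ≤ c i) ∧ x = l + ∑ i, c i • (fun j => (M i j : ℝ))}) :
    -- (i) `Ã_M` is a free `k[t_1,…,t_N]`-module with basis the standard monomials:
    (letI : Algebra (MvPolynomial (Fin N) k)
        (MvPolynomial (Fin n ⊕ Fin N) k ⧸ liftIdeal M I) :=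
      ((MvPolynomial.aeval fun i =>
          Ideal.Quotient.mk (liftIdeal M I) (X (Sum.inr i)) :
        MvPolynomial (Fin N) k →ₐ[k] _).toRingHom).toAlgebra
     LinearIndependent (MvPolynomial (Fin N) k)
        (fun a : {a : Fin n →₀ ℕ // monomial a (1 : k) ∉ initIdeal w₀ I} =>
          Ideal.Quotient.mk (liftIdeal M I)
            (monomial (Finsupp.mapDomain Sum.inl a.1) (1 : k))) ∧
      Submodule.span (MvPolynomial (Fin N) k)
        {x : MvPolynomial (Fin n ⊕ Fin N) k ⧸ liftIdeal M I |
          ∃ a : Fin n →₀ ℕ, monomial a (1 : k) ∉ initIdeal w₀ I ∧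
            x = Ideal.Quotient.mk (liftIdeal M I)
              (monomial (Finsupp.mapDomain Sum.inl a) (1 : k))} = ⊤) ∧
    -- (ii) for every face `τ` of `C` (given by `w₁ ∈ C`) there is `a_τ ∈ k^N` such
    -- that the fiber of the family at `a_τ` is `S/init_τ(I)`;
    -- in particular generic fibers are `S/I` and all `S/init_τ(I)` occur:
    (∀ w₁ : Fin n → ℝ, w₁ ∈ gfCone I w₀ →
      ∃ aτ : Fin N → k, Nonempty
        ((MvPolynomial (Fin n ⊕ Fin N) k ⧸
            (liftIdeal M I ⊔ Ideal.span (Set.range fun i => X (Sum.inr i) - C (aτ i))))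
          ≃ₐ[k] (MvPolynomial (Fin n) k ⧸ initIdeal w₁ I))) := by
  classical
  haveI : IsLinearOrder _ tle := hterm.1
  have hgmex : ∀ m : Fin n →₀ ℕ, monomial m (1:k) ∈ leadIdeal tle I →
      ∃ g, g ∈ I ∧ coeff m g = 1 ∧ (∀ a ∈ g.support, tle a m) ∧
        (∀ a ∈ g.support, a ≠ m → monomial a (1:k) ∉ leadIdeal tle I) :=
    fun m hm => gm_exists hterm hm
  choose gm hgm1 hgm2 hgm3 hgm4 using hgmex
  have hgm : ∀ m hm, gm m hm ∈ I ∧ coeff m (gm m hm) = 1 ∧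
      (∀ a ∈ (gm m hm).support, tle a m) ∧
      (∀ a ∈ (gm m hm).support, a ≠ m → monomial a (1:k) ∉ leadIdeal tle I) :=
    fun m hm => ⟨hgm1 m hm, hgm2 m hm, hgm3 m hm, hgm4 m hm⟩
  have hgm0 : ∀ m hm, gm m hm ≠ 0 := by
    intro m hm h0
    have h1 := hgm2 m hm
    rw [h0, MvPolynomial.coeff_zero] at h1
    exact one_ne_zero h1.symm
  have hgmm : ∀ m hm, m ∈ (gm m hm).support := by
    intro m hm
    rw [MvPolynomial.mem_support_iff, hgm2 m hm]
    exact one_ne_zero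
  have hcrux : ∀ (v : Fin n → ℝ), v ∈ gfCone I w₀ → ∀ m hm, ∀ a ∈ (gm m hm).support,
      wdot v a ≤ wdot v m :=
    fun v hv m hm => crux hterm hmono (hgm1 m hm) (hgm2 m hm) (hgm4 m hm) hv
  have hrowZ : ∀ (i : Fin N) m hm, ∀ a ∈ (gm m hm).support,
      rdotZ (M i) a ≤ rdotZ (M i) m := by
    intro i m hm a ha
    have h1 := hcrux _ (hrows i) m hm a ha
    rw [wdot_cast, wdot_cast] at h1
    exact_mod_cast h1
  have hmu : ∀ m hm (i : Fin N), muM M (gm m hm) i = rdotZ (M i) m :=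
    fun m hm i => muM_eq M _ i (hgmm m hm) (fun a ha => hrowZ i m hm a ha)
  have hliftexp_m : ∀ m hm, liftExp M (gm m hm) m = Finsupp.mapDomain Sum.inl m := by
    intro m hm
    rw [liftExp_eq]
    have h0 : (Finsupp.equivFunOnFinite.symm
        (fun i => (muM M (gm m hm) i - rdotZ (M i) m).toNat)) = (0 : Fin N →₀ ℕ) := by
      ext i
      simp [hmu m hm i]
    rw [h0, Finsupp.mapDomain_zero, add_zero]
  constructor
  · -- part (i)
    letI inst : Algebra (MvPolynomial (Fin N) k)
        (MvPolynomial (Fin n ⊕ Fin N) k ⧸ liftIdeal M I) :=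
      ((MvPolynomial.aeval fun i =>
          Ideal.Quotient.mk (liftIdeal M I) (X (Sum.inr i)) :
        MvPolynomial (Fin N) k →ₐ[k] _).toRingHom).toAlgebra
    have hkey : ∀ (r : MvPolynomial (Fin N) k) (x : MvPolynomial (Fin n ⊕ Fin N) k),
        r • Ideal.Quotient.mk (liftIdeal M I) x =
        Ideal.Quotient.mk (liftIdeal M I)
          (aeval (fun i => (X (Sum.inr i) : MvPolynomial (Fin n ⊕ Fin N) k)) r * x) := by
      intro r x
      rw [Algebra.smul_def]
      have halgmap : (algebraMap (MvPolynomial (Fin N) k)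
          (MvPolynomial (Fin n ⊕ Fin N) k ⧸ liftIdeal M I)) r =
          Ideal.Quotient.mk (liftIdeal M I)
            (aeval (fun i => (X (Sum.inr i) : MvPolynomial (Fin n ⊕ Fin N) k)) r) := by
        have h0 : (algebraMap (MvPolynomial (Fin N) k)
            (MvPolynomial (Fin n ⊕ Fin N) k ⧸ liftIdeal M I)) r = (aeval fun i =>
            Ideal.Quotient.mk (liftIdeal M I) (X (Sum.inr i))) r := rfl
        rw [h0]
        have h2 := MvPolynomial.comp_aeval_apply
          (f := fun i => (X (Sum.inr i) : MvPolynomial (Fin n ⊕ Fin N) k))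
          (Ideal.Quotient.mkₐ k (liftIdeal M I)) r
        simp only [Ideal.Quotient.mkₐ_eq_mk] at h2
        exact h2.symm
      rw [halgmap, ← map_mul]
    -- the standard monomial reduction
    have hstdmem : ∀ a : Fin n →₀ ℕ,
        Ideal.Quotient.mk (liftIdeal M I) (monomial (Finsupp.mapDomain Sum.inl a) (1:k)) ∈
        Submodule.span (MvPolynomial (Fin N) k)
          {x : MvPolynomial (Fin n ⊕ Fin N) k ⧸ liftIdeal M I |
            ∃ a' : Fin n →₀ ℕ, monomial a' (1 : k) ∉ initIdeal w₀ I ∧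
              x = Ideal.Quotient.mk (liftIdeal M I)
                (monomial (Finsupp.mapDomain Sum.inl a') (1 : k))} := by
      intro a
      by_cases hstd : monomial a (1:k) ∈ initIdeal w₀ I
      · -- reduce using gm
        have hm : monomial a (1:k) ∈ leadIdeal tle I := by rwa [hmono] at hstd
        have hlift0 : Ideal.Quotient.mk (liftIdeal M I) (liftPoly M (gm a hm)) = 0 :=
          Ideal.Quotient.eq_zero_iff_mem.2 (Ideal.subset_span ⟨gm a hm, hgm1 a hm, rfl⟩)
        have hsplit : liftPoly M (gm a hm) =
            monomial (Finsupp.mapDomain Sum.inl a) (1:k) +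
            ∑ b ∈ (gm a hm).support.erase a, monomial (liftExp M (gm a hm) b)
              (coeff b (gm a hm)) := by
          rw [liftPoly, ← Finset.add_sum_erase _ _ (hgmm a hm), hgm2 a hm, hliftexp_m a hm]
        have hmain : Ideal.Quotient.mk (liftIdeal M I)
            (monomial (Finsupp.mapDomain Sum.inl a) (1:k)) =
            - ∑ b ∈ (gm a hm).support.erase a,
              Ideal.Quotient.mk (liftIdeal M I)
                (monomial (liftExp M (gm a hm) b) (coeff b (gm a hm))) := by
          rw [← map_sum]
          refine eq_neg_of_add_eq_zero_left ?_
          rw [← map_add, ← hsplit, hlift0]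
        rw [hmain]
        refine Submodule.neg_mem _ (Submodule.sum_mem _ (fun b hb => ?_))
        have hbsupp : b ∈ (gm a hm).support := Finset.mem_of_mem_erase hb
        have hbne : b ≠ a := Finset.ne_of_mem_erase hb
        have hbstd : monomial b (1:k) ∉ initIdeal w₀ I := by
          rw [hmono]
          exact hgm4 a hm b hbsupp hbne
        -- rewrite the monomial as a scalar multiple of the standard generator
        have hexp : monomial (liftExp M (gm a hm) b) (coeff b (gm a hm)) =
            (aeval (fun i => (X (Sum.inr i) : MvPolynomial (Fin n ⊕ Fin N) k)))
              (monomial (Finsupp.equivFunOnFinite.symm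
                (fun i => (muM M (gm a hm) i - rdotZ (M i) b).toNat))
                (coeff b (gm a hm))) *
            monomial (Finsupp.mapDomain Sum.inl b) (1:k) := by
          rw [psi_monomial, MvPolynomial.monomial_mul, mul_one, liftExp_eq, add_comm]
        have : Ideal.Quotient.mk (liftIdeal M I)
            (monomial (liftExp M (gm a hm) b) (coeff b (gm a hm))) =
            (monomial (Finsupp.equivFunOnFinite.symm
                (fun i => (muM M (gm a hm) i - rdotZ (M i) b).toNat))
                (coeff b (gm a hm)) : MvPolynomial (Fin N) k) •
            Ideal.Quotient.mk (liftIdeal M I)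
              (monomial (Finsupp.mapDomain Sum.inl b) (1:k)) := by
          rw [hkey, ← hexp]
        rw [this]
        exact Submodule.smul_mem _ _ (Submodule.subset_span ⟨b, hbstd, rfl⟩)
      · exact Submodule.subset_span ⟨a, hstd, rfl⟩
    constructor
    · -- linear independence
      rw [linearIndependent_iff]
      intro l hl
      set e : {a : Fin n →₀ ℕ // monomial a (1 : k) ∉ initIdeal w₀ I} ↪ (Fin n →₀ ℕ) :=
        ⟨Subtype.val, Subtype.val_injective⟩ with he
      set l' : (Fin n →₀ ℕ) →₀ MvPolynomial (Fin N) k := Finsupp.embDomain e l with hl'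
      have hsum : (∑ a ∈ l'.support,
          (aeval (fun i => (X (Sum.inr i) : MvPolynomial (Fin n ⊕ Fin N) k)) (l' a)) *
            monomial (Finsupp.mapDomain Sum.inl a) (1:k)) ∈ liftIdeal M I := by
        rw [← Ideal.Quotient.eq_zero_iff_mem, map_sum]
        rw [hl', Finsupp.support_embDomain, Finset.sum_map]
        have hterm' : ∀ b ∈ l.support,
            Ideal.Quotient.mk (liftIdeal M I)
              ((aeval (fun i => (X (Sum.inr i) : MvPolynomial (Fin n ⊕ Fin N) k))
                (Finsupp.embDomain e l (e b))) *
              monomial (Finsupp.mapDomain Sum.inl (e b)) (1:k)) =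
            (l b) • Ideal.Quotient.mk (liftIdeal M I)
              (monomial (Finsupp.mapDomain Sum.inl b.1) (1:k)) := by
          intro b _
          rw [Finsupp.embDomain_apply_self, ← hkey]
          rfl
        rw [Finset.sum_congr rfl hterm']
        rw [Finsupp.linearCombination_apply, Finsupp.sum] at hl
        exact hl
      have hstd' : ∀ a ∈ l'.support, monomial a (1:k) ∉ leadIdeal tle I := by
        intro a hal
        rw [hl', Finsupp.support_embDomain, Finset.mem_map] at hal
        obtain ⟨b, _, rfl⟩ := hal
        rw [← hmono]
        exact b.2
      have hzero : l' = 0 := key_injective hterm M l' hstd' hsum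
      rw [hl', Finsupp.embDomain_eq_zero] at hzero
      exact hzero
    · -- spanning
      rw [eq_top_iff]
      rintro x -
      obtain ⟨p, rfl⟩ := Ideal.Quotient.mk_surjective x
      induction p using MvPolynomial.induction_on' with
      | add p q hp hq =>
        rw [map_add]
        exact Submodule.add_mem _ hp hq
      | monomial u c =>
        set a : Fin n →₀ ℕ := Finsupp.equivFunOnFinite.symm (fun j => u (Sum.inl j)) with ha
        set t : Fin N →₀ ℕ := Finsupp.equivFunOnFinite.symm (fun i => u (Sum.inr i)) with ht
        have husplit : u = Finsupp.mapDomain Sum.inl a + Finsupp.mapDomain Sum.inr t := by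
          ext s
          rw [Finsupp.add_apply]
          cases s with
          | inl j =>
            rw [Finsupp.mapDomain_apply Sum.inl_injective,
              Finsupp.mapDomain_notin_range _ _ (by simp), add_zero]
            simp [ha]
          | inr i =>
            rw [Finsupp.mapDomain_notin_range _ _ (by simp),
              Finsupp.mapDomain_apply Sum.inr_injective, zero_add]
            simp [ht]
        have hexp : monomial u c =
            (aeval (fun i => (X (Sum.inr i) : MvPolynomial (Fin n ⊕ Fin N) k)))
              (monomial t c) * monomial (Finsupp.mapDomain Sum.inl a) (1:k) := by
          rw [psi_monomial, MvPolynomial.monomial_mul, mul_one, husplit, add_comm]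
        have hfin : Ideal.Quotient.mk (liftIdeal M I) (monomial u c) =
            (monomial t c : MvPolynomial (Fin N) k) •
            Ideal.Quotient.mk (liftIdeal M I)
              (monomial (Finsupp.mapDomain Sum.inl a) (1:k)) := by
          rw [hkey, ← hexp]
        rw [hfin]
        exact Submodule.smul_mem _ _ (hstdmem a)
  · -- part (ii)
    intro w₁ hw₁
    have hw₁' := hw₁
    rw [hCgen] at hw₁'
    obtain ⟨l, hlI, c, hc, hw₁eq⟩ := hw₁'
    refine ⟨(fun i => if c i = 0 then (1:k) else 0), ?_⟩
    set v : Fin N → k := fun i => if c i = 0 then (1:k) else 0 with hv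
    set P : Finset (Fin N) := Finset.univ.filter (fun i => c i ≠ 0) with hP
    set wP : Fin n → ℝ := ∑ i ∈ Finset.univ.filter (fun i => c i ≠ 0),
      (fun j => (M i j : ℝ)) with hwP
    have hlC : l ∈ gfCone I w₀ := by
      rw [hCgen]
      refine ⟨l, hlI, 0, fun i => le_rfl, ?_⟩
      simp
    have hlflat : ∀ m hm, ∀ a ∈ (gm m hm).support, wdot l a = wdot l m :=
      fun m hm => flat hterm (hgm1 m hm) (hgm2 m hm) (hgm4 m hm) hlI (hcrux l hlC m hm)
    have hw₁dot : ∀ x, wdot w₁ x = wdot l x + ∑ i, c i * wdot (fun j => (M i j : ℝ)) x := by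
      intro x
      rw [hw₁eq, wdot_add, wdot_sum]
      congr 1
      exact Finset.sum_congr rfl (fun i _ => wdot_smul _ _ _)
    have hwPdot : ∀ x, wdot wP x = ∑ i ∈ P, wdot (fun j => (M i j : ℝ)) x := by
      intro x
      rw [hwP, ← hP]
      exact wdot_sum _ _ _
    have halignP : ∀ m hm, ∀ a ∈ (gm m hm).support, wdot wP a ≤ wdot wP m := by
      intro m hm a ha
      rw [hwPdot, hwPdot]
      exact Finset.sum_le_sum (fun i _ => hcrux _ (hrows i) m hm a ha)
    have halign1 : ∀ m hm, ∀ a ∈ (gm m hm).support, wdot w₁ a ≤ wdot w₁ m := by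
      intro m hm a ha
      rw [hw₁dot, hw₁dot]
      refine add_le_add (le_of_eq (hlflat m hm a ha)) ?_
      exact Finset.sum_le_sum (fun i _ =>
        mul_le_mul_of_nonneg_left (hcrux _ (hrows i) m hm a ha) (hc i))
    have hformeq : ∀ m hm, initForm w₁ (gm m hm) = initForm wP (gm m hm) := by
      intro m hm
      refine initForm_congr _ _ _ (fun e he => ?_)
      have hGsup := hgmm m hm
      have hl_e := hlflat m hm e he
      constructor
      · intro h1
        have heq1 : wdot w₁ e = wdot w₁ m :=
          le_antisymm (halign1 m hm e he) (h1 m hGsup)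
        have hsum0 : ∑ i, c i * (wdot (fun j => (M i j:ℝ)) m -
            wdot (fun j => (M i j:ℝ)) e) = 0 := by
          rw [hw₁dot, hw₁dot, hl_e] at heq1
          simp only [mul_sub]
          rw [Finset.sum_sub_distrib]
          linarith
        have hterm0 := (Finset.sum_eq_zero_iff_of_nonneg (fun i _ =>
          mul_nonneg (hc i) (sub_nonneg.2 (hcrux _ (hrows i) m hm e he)))).1 hsum0
        intro a ha
        have hae : ∀ i ∈ P, wdot (fun j => (M i j:ℝ)) e = wdot (fun j => (M i j:ℝ)) m := by
          intro i hi
          have hci : c i ≠ 0 := (Finset.mem_filter.1 hi).2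
          have h2 := hterm0 i (Finset.mem_univ i)
          rcases mul_eq_zero.1 h2 with h3 | h3
          · exact absurd h3 hci
          · linarith
        rw [hwPdot, hwPdot]
        calc ∑ i ∈ P, wdot (fun j => (M i j:ℝ)) a
            ≤ ∑ i ∈ P, wdot (fun j => (M i j:ℝ)) m :=
              Finset.sum_le_sum (fun i _ => hcrux _ (hrows i) m hm a ha)
          _ = ∑ i ∈ P, wdot (fun j => (M i j:ℝ)) e :=
              Finset.sum_congr rfl (fun i hi => (hae i hi).symm)
      · intro h2
        have heq2 : wdot wP e = wdot wP m :=
          le_antisymm (halignP m hm e he) (h2 m hGsup)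
        have hsum0 : ∑ i ∈ P, (wdot (fun j => (M i j:ℝ)) m -
            wdot (fun j => (M i j:ℝ)) e) = 0 := by
          rw [hwPdot, hwPdot] at heq2
          rw [Finset.sum_sub_distrib]
          linarith
        have hterm0 := (Finset.sum_eq_zero_iff_of_nonneg (fun i _ =>
          sub_nonneg.2 (hcrux _ (hrows i) m hm e he))).1 hsum0
        intro a ha
        have heq1 : wdot w₁ e = wdot w₁ m := by
          rw [hw₁dot, hw₁dot, hl_e]
          congr 1
          refine Finset.sum_congr rfl (fun i _ => ?_)
          by_cases hci : c i = 0
          · rw [hci, zero_mul, zero_mul]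
          · have hi : i ∈ P := Finset.mem_filter.2 ⟨Finset.mem_univ i, hci⟩
            have h3 := hterm0 i hi
            have h4 : wdot (fun j => (M i j:ℝ)) e = wdot (fun j => (M i j:ℝ)) m := by
              linarith
            rw [h4]
        calc wdot w₁ a ≤ wdot w₁ m := halign1 m hm a ha
          _ = wdot w₁ e := heq1.symm
    have hW1P : initIdeal w₁ I = initIdeal wP I := by
      refine le_antisymm ?_ ?_
      · refine initIdeal_le hterm gm hgm w₁ halign1 (initIdeal wP I) (fun m hm => ?_)
        rw [hformeq m hm]
        exact Ideal.subset_span ⟨gm m hm, hgm1 m hm, hgm0 m hm, rfl⟩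
      · refine initIdeal_le hterm gm hgm wP halignP (initIdeal w₁ I) (fun m hm => ?_)
        rw [← hformeq m hm]
        exact Ideal.subset_span ⟨gm m hm, hgm1 m hm, hgm0 m hm, rfl⟩
    set ε := (aeval (Sum.elim X (fun i => C (v i)) :
        Fin n ⊕ Fin N → MvPolynomial (Fin n) k) :
      MvPolynomial (Fin n ⊕ Fin N) k →ₐ[k] MvPolynomial (Fin n) k) with hε
    have hmap : Ideal.map ε (liftIdeal M I) = initIdeal wP I := by
      refine le_antisymm ?_ ?_
      · rw [liftIdeal, Ideal.map_span]
        refine Ideal.span_le.2 ?_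
        rintro y ⟨x', ⟨f, hfI, rfl⟩, rfl⟩
        show aeval (Sum.elim X (fun i => C (v i))) (liftPoly M f) ∈ initIdeal wP I
        by_cases hal : ∃ a ∈ f.support, ∀ i, c i ≠ 0 → rdotZ (M i) a = muM M f i
        · obtain ⟨a₀, ha₀, hala⟩ := hal
          rw [hv, eval_liftPoly_aligned M c f ha₀ hala]
          have hf0 : f ≠ 0 := by
            intro h0
            rw [h0] at ha₀
            simp at ha₀
          exact Ideal.subset_span ⟨f, hfI, hf0, rfl⟩
        · push_neg at hal
          rw [hv, eval_liftPoly_unaligned M c f ?_]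
          · exact Ideal.zero_mem _
          · intro a ha
            obtain ⟨i, hci, hne⟩ := hal a ha
            exact ⟨i, hci, hne⟩
      · refine initIdeal_le hterm gm hgm wP halignP _ (fun m hm => ?_)
        have heval : initForm wP (gm m hm) = ε (liftPoly M (gm m hm)) := by
          rw [hε, hv, eval_liftPoly_aligned M c (gm m hm) (hgmm m hm)
            (fun i _ => (hmu m hm i).symm)]
        rw [heval]
        exact Ideal.mem_map_of_mem _ (Ideal.subset_span ⟨gm m hm, hgm1 m hm, rfl⟩)
    have hsurj : Function.Surjective ((Ideal.Quotient.mkₐ k (initIdeal w₁ I)).comp ε) :=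
      (Ideal.Quotient.mkₐ_surjective k _).comp (elim_surjective v)
    have hker : RingHom.ker ((Ideal.Quotient.mkₐ k (initIdeal w₁ I)).comp ε) =
        liftIdeal M I ⊔ Ideal.span (Set.range fun i =>
          (X (Sum.inr i) : MvPolynomial (Fin n ⊕ Fin N) k) - C (v i)) := by
      rw [← AlgHom.comap_ker, AlgHom.ker_coe, Ideal.Quotient.mkₐ_ker, hW1P, ← hmap]
      have hcm := Ideal.comap_map_of_surjective (ε : MvPolynomial (Fin n ⊕ Fin N) k →+*
        MvPolynomial (Fin n) k) (elim_surjective v) (liftIdeal M I)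
      rw [show Ideal.comap ε (Ideal.map ε (liftIdeal M I)) =
        Ideal.comap (ε : MvPolynomial (Fin n ⊕ Fin N) k →+* MvPolynomial (Fin n) k)
          (Ideal.map (ε : MvPolynomial (Fin n ⊕ Fin N) k →+* MvPolynomial (Fin n) k)
            (liftIdeal M I)) from rfl, hcm]
      congr 1
      rw [show Ideal.comap (ε : MvPolynomial (Fin n ⊕ Fin N) k →+* MvPolynomial (Fin n) k)
        ⊥ = RingHom.ker ε from rfl]
      exact ker_elim v
    exact ⟨(Ideal.quotientEquivAlgOfEq k hker.symm).trans
      (Ideal.quotientKerAlgEquivOfSurjective hsurj)⟩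
end
end
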